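/- arXiv:2005.02913 — 4 statements merged into one kernel-verified Lean document; each statement's English description precedes it below -/
import Mathlib

section
/- Let G be a graph with a perfect matching M. If M contains an edge cut of G of odd cardinality, then there is no perfect matching N of G such that M ∪ N forms a Hamiltonian cycle of G. -/
open SimpleGraph

/-- The cycle graph on `ZMod n`: consecutive elements are adjacent. -/
def cycGraph (n : ℕ) : SimpleGraph (ZMod n) where
  Adj u v := u ≠ v ∧ (u = v + 1 ∨ v = u + 1)
  symm := ⟨fun _ _ h => ⟨h.1.symm, h.2.symm⟩⟩
  loopless := ⟨fun _ h => h.1 rfl⟩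

/-- The edge set of a closed walk, as a set. -/
def walkEdgeSet {V : Type*} {G : SimpleGraph V} {v : V} (c : G.Walk v v) : Set (Sym2 V) :=
  {e | e ∈ c.edges}

/-- The perfect matching `M` extends to a Hamiltonian cycle of `G`: there is a perfect
matching `N` of `G` such that `M ∪ N` is the edge set of a Hamiltonian cycle of `G`. -/
def ExtendsToHamCycle {V : Type*} [DecidableEq V] (G : SimpleGraph V) (M : G.Subgraph) : Prop :=
  ∃ N : G.Subgraph, N.IsPerfectMatching ∧
    ∃ (v : V) (c : G.Walk v v), c.IsHamiltonianCycle ∧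
      walkEdgeSet c = M.edgeSet ∪ N.edgeSet

/-- The PMH-property: `G` has a perfect matching and every perfect matching of `G`
extends to a Hamiltonian cycle of `G`. -/
def HasPMH {V : Type*} [DecidableEq V] (G : SimpleGraph V) : Prop :=
  (∃ M : G.Subgraph, M.IsPerfectMatching) ∧
    ∀ M : G.Subgraph, M.IsPerfectMatching → ExtendsToHamCycle G M

/-- `X` is an edge cut of `G`: the set of edges of `G` with exactly one endpoint in `S`,
for some nonempty proper subset `S` of the vertices. -/
def IsEdgeCut {V : Type*} (G : SimpleGraph V) (X : Set (Sym2 V)) : Prop :=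
  ∃ S : Set V, S.Nonempty ∧ S ≠ Set.univ ∧
    X = {e | e ∈ G.edgeSet ∧ ∃ u v, e = s(u, v) ∧ u ∈ S ∧ v ∉ S}

open SimpleGraph Classical in
lemma walk_cross_parity {V : Type*} {G : SimpleGraph V} (S : Set V) {u v : V} (p : G.Walk u v) :
    Even (p.edges.countP (fun e => decide (∃ a b, e = s(a,b) ∧ a ∈ S ∧ b ∉ S))) ↔
      ((u ∈ S) ↔ (v ∈ S)) := by
  induction p with
  | nil => simp
  | @cons u w v h p ih =>
    rw [SimpleGraph.Walk.edges_cons, List.countP_cons]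
    have hc : (decide (∃ a b, s(u,w) = s(a,b) ∧ a ∈ S ∧ b ∉ S) : Bool) = true ↔
        ((u ∈ S ∧ w ∉ S) ∨ (w ∈ S ∧ u ∉ S)) := by
      simp only [decide_eq_true_eq]
      constructor
      · rintro ⟨a, b, hab, ha, hb⟩
        rw [Sym2.eq_iff] at hab
        rcases hab with ⟨rfl, rfl⟩ | ⟨rfl, rfl⟩
        · exact Or.inl ⟨ha, hb⟩
        · exact Or.inr ⟨ha, hb⟩
      · rintro (⟨h1, h2⟩ | ⟨h1, h2⟩)
        · exact ⟨u, w, rfl, h1, h2⟩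
        · exact ⟨w, u, Sym2.eq_swap.symm ▸ rfl, h1, h2⟩
    by_cases hcross : (u ∈ S ∧ w ∉ S) ∨ (w ∈ S ∧ u ∉ S)
    · rw [if_pos (hc.mpr hcross), Nat.even_add_one, ih]
      constructor
      · intro hne
        constructor
        · intro hu; by_contra hv
          rcases hcross with ⟨_, h2⟩ | ⟨h1, h2⟩
          · exact hne (iff_of_false h2 hv)
          · exact hne (iff_of_true h1 ((not_not.mp) (by tauto)))
        · intro hv; by_contra hu
          rcases hcross with ⟨h1, h2⟩ | ⟨h1, h2⟩
          · tauto
          · tauto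
      · intro hiff hne; tauto
    · rw [if_neg (fun ht => hcross (hc.mp ht)), Nat.add_zero, ih]
      push_neg at hcross
      constructor <;> intro h1 <;> tauto


/-- If a perfect matching `M` of `G` contains an edge cut of odd cardinality, then `M`
cannot be extended to a Hamiltonian cycle of `G`. -/
theorem stmt_3 {V : Type*} [DecidableEq V] (G : SimpleGraph V)
    (M : G.Subgraph) (hM : M.IsPerfectMatching)
    (X : Set (Sym2 V)) (hX : IsEdgeCut G X) (hXM : X ⊆ M.edgeSet)
    (hodd : Odd X.ncard) :
    ¬ ExtendsToHamCycle G M := by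
  rintro ⟨N, hN, v, c, hc, hce⟩
  obtain ⟨S, -, -, hXeq⟩ := hX
  have hpar := (walk_cross_parity S c).mpr Iff.rfl
  set f : Sym2 V → Bool :=
    fun e => @decide (∃ a b, e = s(a,b) ∧ a ∈ S ∧ b ∉ S) (Classical.propDecidable _) with hf
  have hnodup : c.edges.Nodup := hc.isCycle.edges_nodup
  have hXfin : X = ↑(c.edges.filter f).toFinset := by
    ext e
    simp only [List.coe_toFinset, Set.mem_setOf_eq, List.mem_filter]
    constructor
    · intro heX
      have hce' : e ∈ c.edges := by
        have h1 : e ∈ M.edgeSet ∪ N.edgeSet := Or.inl (hXM heX)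
        rw [← hce] at h1; exact h1
      refine ⟨hce', ?_⟩
      rw [hXeq] at heX
      simp only [hf, decide_eq_true_eq]
      exact heX.2
    · rintro ⟨hec, hfe⟩
      rw [hXeq]
      exact ⟨c.edges_subset_edgeSet hec, by simpa [hf, decide_eq_true_eq] using hfe⟩
  have hcard : X.ncard = c.edges.countP f := by
    rw [hXfin, Set.ncard_coe_finset, List.toFinset_card_of_nodup (hnodup.filter f),
      List.countP_eq_length_filter]
  rw [hcard] at hodd
  exact Nat.not_even_iff_odd.mpr hodd hpar
end

section
/- For every p ≥ 3 and q ≥ 3, the graph C_p □ P_q does not have the PMH-property; that is, there exists a perfect matching of C_p □ P_q (when one exists at all) that cannot be extended to a Hamiltonian cycle, or C_p □ P_q has no perfect matching. -/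
open SimpleGraph

lemma cycle_two_edges {V : Type*} {G : SimpleGraph V} {v : V} {d : G.Walk v v}
    (hd : d.IsCycle) : ∃ w w', w ≠ w' ∧ s(v, w) ∈ d.edges ∧ s(v, w') ∈ d.edges := by
  cases d with
  | nil => exact absurd rfl hd.ne_nil
  | @cons _ w _ h t =>
    rw [Walk.cons_isCycle_iff] at hd
    obtain ⟨hpath, hne⟩ := hd
    have hrevnil : ¬ t.reverse.Nil := Walk.not_nil_of_ne h.ne
    obtain ⟨u, hadj, r, hr⟩ := Walk.not_nil_iff.mp hrevnil
    have hmem : s(v, u) ∈ t.reverse.edges := by rw [hr]; simp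
    have hmem' : s(v, u) ∈ t.edges := by
      rwa [Walk.edges_reverse, List.mem_reverse] at hmem
    refine ⟨w, u, ?_, ?_, ?_⟩
    · rintro rfl; exact hne hmem'
    · simp
    · simp [hmem']

lemma ham_two_edges {V : Type*} [DecidableEq V] {G : SimpleGraph V} {a : V} {c : G.Walk a a}
    (hc : c.IsHamiltonianCycle) (v : V) :
    ∃ w w', w ≠ w' ∧ s(v, w) ∈ c.edges ∧ s(v, w') ∈ c.edges := by
  have hv : v ∈ c.support := hc.mem_support v
  obtain ⟨w, w', hne, h1, h2⟩ := cycle_two_edges (hc.isCycle.rotate hv)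
  have hrot := (c.rotate_edges v hv).mem_iff (a := s(v, w))
  have hrot' := (c.rotate_edges v hv).mem_iff (a := s(v, w'))
  exact ⟨w, w', hne, hrot.mp h1, hrot'.mp h2⟩

lemma matchings_disjoint {V : Type*} [DecidableEq V] {G : SimpleGraph V} {a : V} {c : G.Walk a a}
    (hc : c.IsHamiltonianCycle) {M N : G.Subgraph}
    (hM : M.IsPerfectMatching) (hN : N.IsPerfectMatching)
    (hE : walkEdgeSet c = M.edgeSet ∪ N.edgeSet)
    {v w : V} (h1 : M.Adj v w) (h2 : N.Adj v w) : False := by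
  obtain ⟨x, y, hxy, hx, hy⟩ := ham_two_edges hc v
  have key : ∀ z, s(v, z) ∈ c.edges → z = w := by
    intro z hz
    have hz' : s(v, z) ∈ M.edgeSet ∪ N.edgeSet := by
      rw [← hE]; exact hz
    rcases hz' with h | h
    · exact (hM.1 (hM.2 v)).unique (Subgraph.mem_edgeSet.mp h) h1
    · exact (hN.1 (hN.2 v)).unique (Subgraph.mem_edgeSet.mp h) h2
  exact hxy ((key x hx).trans (key y hy).symm)

lemma ham_crossing {V : Type*} [DecidableEq V] {G : SimpleGraph V} {a : V} {c : G.Walk a a}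
    (hc : c.IsHamiltonianCycle) (S : Set V) {x y : V} (hx : x ∈ S) (hy : y ∉ S) :
    ∃ u v, u ∈ S ∧ v ∉ S ∧ s(u, v) ∈ c.edges := by
  by_cases ha : a ∈ S
  · have hys : y ∈ c.support := hc.mem_support y
    obtain ⟨d, hd, h1, h2⟩ := (c.takeUntil y hys).exists_boundary_dart S ha hy
    refine ⟨d.fst, d.snd, h1, h2, c.edges_takeUntil_subset hys ?_⟩
    have : d.edge ∈ (c.takeUntil y hys).edges := List.mem_map_of_mem hd
    simpa [Dart.edge] using this
  · have hxs : x ∈ c.support := hc.mem_support x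
    obtain ⟨d, hd, h1, h2⟩ := (c.takeUntil x hxs).exists_boundary_dart Sᶜ ha (fun h => h hx)
    refine ⟨d.snd, d.fst, not_not.mp h2, h1, ?_⟩
    have : d.edge ∈ (c.takeUntil x hxs).edges := List.mem_map_of_mem hd
    have h3 := c.edges_takeUntil_subset hxs this
    rw [Sym2.eq_swap]
    simpa [Dart.edge] using h3

/-- For every `p, q ≥ 3`, the graph `C_p □ P_q` does not have the PMH-property. -/
theorem stmt_6 (p q : ℕ) (hp : 3 ≤ p) (hq : 3 ≤ q) :
    ¬ HasPMH (cycGraph p □ SimpleGraph.pathGraph q) := by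
  rintro ⟨⟨M₀, hM₀⟩, hext⟩
  haveI : NeZero p := ⟨by omega⟩
  haveI : Fact (1 < p) := ⟨by omega⟩
  rcases Nat.even_or_odd p with hpe | hpo
  · -- p even : horizontal matching with phase mismatch between layer 0 and layer 1
    obtain ⟨r, hr⟩ := hpe
    have hdvd : (2:ℕ) ∣ p := ⟨r, by omega⟩
    let par : ZMod p →+* ZMod 2 := ZMod.castHom hdvd (ZMod 2)
    let ε : Fin q → ZMod 2 := fun j => if j.val = 0 then 0 else 1
    have z2ne : ∀ a b : ZMod 2, a ≠ b → a = b + 1 := by decide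
    have z2a : ∀ a : ZMod 2, a + 1 = 1 → a = 0 := by decide
    have z2b : ∀ a : ZMod 2, a = 1 → a + 1 = 0 := by decide
    have z2c : ∀ a : ZMod 2, a + 1 = 0 → a = 1 := by decide
    have z2d : ∀ a : ZMod 2, a = 0 → a + 1 = 1 := by decide
    have z2e : ∀ a : ZMod 2, ¬ a = a + 1 := by decide
    have hii : ∀ i : ZMod p, i ≠ i + 1 := fun i h => one_ne_zero (left_eq_add.mp h)
    have parsucc : ∀ a : ZMod p, par (a + 1) = par a + 1 := fun a => by rw [map_add, map_one]
    have hε0 : ∀ h0 : 0 < q, ε ⟨0, h0⟩ = 0 := fun _ => rfl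
    have hε1 : ∀ (m : ℕ) (h : m + 1 < q), ε ⟨m+1, h⟩ = 1 := fun m h => rfl
    have h0q : 0 < q := by omega
    have hMhex : ∃ Mh : (cycGraph p □ SimpleGraph.pathGraph q).Subgraph,
        Mh.IsPerfectMatching ∧
        (∀ x y : ZMod p × Fin q, Mh.Adj x y ↔ (x.2 = y.2 ∧
          ((y.1 = x.1 + 1 ∧ par x.1 = ε x.2) ∨ (x.1 = y.1 + 1 ∧ par y.1 = ε x.2)))) := by
      refine ⟨{ verts := Set.univ
                Adj := fun x y => x.2 = y.2 ∧
                  ((y.1 = x.1 + 1 ∧ par x.1 = ε x.2) ∨ (x.1 = y.1 + 1 ∧ par y.1 = ε x.2))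
                adj_sub := ?_
                edge_vert := fun _ => Set.mem_univ _
                symm := ?_ }, ⟨?_, fun v => Set.mem_univ _⟩, fun x y => Iff.rfl⟩
      · rintro ⟨i, j⟩ ⟨k, l⟩ ⟨h1, h2⟩
        have h1' : j = l := h1
        subst h1'
        refine boxProd_adj.mpr (Or.inl ⟨?_, rfl⟩)
        show (cycGraph p).Adj i k
        rcases h2 with ⟨ha, -⟩ | ⟨ha, -⟩
        · have ha' : k = i + 1 := ha
          subst ha'
          exact ⟨hii i, Or.inr rfl⟩
        · have ha' : i = k + 1 := ha
          subst ha'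
          exact ⟨(hii k).symm, Or.inl rfl⟩
      · refine ⟨?_⟩
        rintro ⟨i, j⟩ ⟨k, l⟩ ⟨h1, h2⟩
        have h1' : j = l := h1
        subst h1'
        refine ⟨rfl, ?_⟩
        rcases h2 with ⟨ha, hb⟩ | ⟨ha, hb⟩
        · exact Or.inr ⟨ha, hb⟩
        · exact Or.inl ⟨ha, hb⟩
      · rintro ⟨i, j⟩ -
        by_cases hpar : par i = ε j
        · refine ⟨(i + 1, j), ⟨rfl, Or.inl ⟨rfl, hpar⟩⟩, ?_⟩
          rintro ⟨k, l⟩ ⟨h1, h2⟩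
          have h1' : j = l := h1
          subst h1'
          rcases h2 with ⟨ha, hb⟩ | ⟨ha, hb⟩
          · have ha' : k = i + 1 := ha
            exact Prod.ext ha' rfl
          · exfalso
            have ha' : i = k + 1 := ha
            have hb' : par k = ε j := hb
            have hcalc : par i = par k + 1 := by rw [ha', parsucc]
            have : par k = par k + 1 :=
              calc par k = ε j := hb'
                _ = par i := hpar.symm
                _ = par k + 1 := hcalc
            exact z2e _ this
        · have hpar' : par i = ε j + 1 := z2ne _ _ hpar
          refine ⟨(i - 1, j), ⟨rfl, Or.inr ⟨?_, ?_⟩⟩, ?_⟩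
          · show i = i - 1 + 1
            rw [sub_add_cancel]
          · show par (i - 1) = ε j
            rw [map_sub, map_one, hpar', add_sub_cancel_right]
          · rintro ⟨k, l⟩ ⟨h1, h2⟩
            have h1' : j = l := h1
            subst h1'
            rcases h2 with ⟨ha, hb⟩ | ⟨ha, hb⟩
            · have hb' : par i = ε j := hb
              exact absurd hb' hpar
            · have ha' : i = k + 1 := ha
              exact Prod.ext (eq_sub_of_add_eq ha'.symm) rfl
    obtain ⟨Mh, hMh, hMhadj⟩ := hMhex
    obtain ⟨N, hN, v0, c, hc, hE⟩ := hext Mh hMh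
    have hdisj : ∀ {x y}, Mh.Adj x y → N.Adj x y → False :=
      fun hm hn => matchings_disjoint hc hMh hN hE hm hn
    have Nuniq : ∀ {v w1 w2 : ZMod p × Fin q}, N.Adj v w1 → N.Adj v w2 → w1 = w2 :=
      fun {v w1 w2} h1 h2 => (hN.1 (hN.2 v)).unique h1 h2
    have Npart : ∀ v : ZMod p × Fin q, ∃ w, N.Adj v w := fun v => (hN.1 (hN.2 v)).exists
    have hedge : ∀ {u v : ZMod p × Fin q}, s(u, v) ∈ c.edges → Mh.Adj u v ∨ N.Adj u v := by
      intro u v h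
      have h' : s(u, v) ∈ Mh.edgeSet ∪ N.edgeSet := by rw [← hE]; exact h
      rcases h' with h' | h'
      · exact Or.inl (Subgraph.mem_edgeSet.mp h')
      · exact Or.inr (Subgraph.mem_edgeSet.mp h')
    let χ : ℕ → ZMod p → Prop := fun j i =>
      ∃ h : j + 1 < q, N.Adj (i, ⟨j, Nat.lt_of_succ_lt h⟩) (i, ⟨j + 1, h⟩)
    have hD : ∀ (j : ℕ) (i : ZMod p), χ j i → ¬ χ (j+1) i := by
      rintro j i ⟨hj, hadj⟩ ⟨hj', hadj'⟩
      have h2 := Nuniq (N.adj_symm hadj) hadj'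
      simp only [Prod.mk.injEq, Fin.mk.injEq] at h2
      omega
    have hnov : ∀ {i k : ZMod p} {jf : Fin q}, N.Adj (i, jf) (k, jf) →
        ∀ (j : ℕ), (j = jf.val ∨ j + 1 = jf.val) → ¬ χ j i := by
      rintro i k jf hadj j hj ⟨hlt, hv⟩
      rcases hj with hj | hj
      · have hjf : jf = ⟨j, Nat.lt_of_succ_lt hlt⟩ := Fin.ext hj.symm
        rw [hjf] at hadj
        have h2 := Nuniq hadj hv
        simp only [Prod.mk.injEq, Fin.mk.injEq] at h2
        omega
      · have hjf : jf = ⟨j + 1, hlt⟩ := Fin.ext hj.symm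
        rw [hjf] at hadj
        have h2 := Nuniq hadj (N.adj_symm hv)
        simp only [Prod.mk.injEq, Fin.mk.injEq] at h2
        omega
    have hC0 : ∀ i : ZMod p, par i = 1 → ¬ χ 0 i → ¬ χ 0 (i+1) := by
      intro i hpi hni
      obtain ⟨⟨w1, w2⟩, hw⟩ := Npart (i, (⟨0, h0q⟩ : Fin q))
      rcases boxProd_adj.mp (N.adj_sub hw) with ⟨hcyc, h2⟩ | ⟨hpath, h2⟩
      · have h2' : (⟨0, h0q⟩ : Fin q) = w2 := h2
        subst h2'
        have hcycA : i = w1 + 1 ∨ w1 = i + 1 := hcyc.2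
        rcases hcycA with hor | hor
        · exfalso
          refine hdisj ((hMhadj (i, ⟨0, h0q⟩) (w1, ⟨0, h0q⟩)).mpr ⟨rfl, Or.inr ⟨hor, ?_⟩⟩) hw
          show par w1 = ε ⟨0, h0q⟩
          rw [hε0 h0q]
          have hcalc : par i = par w1 + 1 := by rw [hor, parsucc]
          exact z2a _ (hcalc.symm.trans hpi)
        · subst hor
          exact hnov (N.adj_symm hw) 0 (Or.inl rfl)
      · exfalso
        apply hni
        have h2' : i = w1 := h2
        subst h2'
        have h01 : 0 + 1 = w2.val ∨ w2.val + 1 = 0 := pathGraph_adj.mp hpath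
        have hw2 : w2.val = 1 := by omega
        have he2 : w2 = (⟨1, by omega⟩ : Fin q) := Fin.ext hw2
        rw [he2] at hw
        exact ⟨by omega, hw⟩
    have hC0' : ∀ i : ZMod p, par i = 1 → ¬ χ 0 (i+1) → ¬ χ 0 i := by
      intro i hpi hni
      obtain ⟨⟨w1, w2⟩, hw⟩ := Npart (i + 1, (⟨0, h0q⟩ : Fin q))
      rcases boxProd_adj.mp (N.adj_sub hw) with ⟨hcyc, h2⟩ | ⟨hpath, h2⟩
      · have h2' : (⟨0, h0q⟩ : Fin q) = w2 := h2
        subst h2'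
        have hcycA : i + 1 = w1 + 1 ∨ w1 = (i + 1) + 1 := hcyc.2
        rcases hcycA with hor | hor
        · have hw1 : w1 = i := add_right_cancel hor.symm
          subst hw1
          exact hnov (N.adj_symm hw) 0 (Or.inl rfl)
        · exfalso
          refine hdisj ((hMhadj (i + 1, ⟨0, h0q⟩) (w1, ⟨0, h0q⟩)).mpr ⟨rfl, Or.inl ⟨hor, ?_⟩⟩) hw
          show par (i + 1) = ε ⟨0, h0q⟩
          rw [hε0 h0q, parsucc]
          exact z2b _ hpi
      · exfalso
        apply hni
        have h2' : i + 1 = w1 := h2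
        subst h2'
        have h01 : 0 + 1 = w2.val ∨ w2.val + 1 = 0 := pathGraph_adj.mp hpath
        have hw2 : w2.val = 1 := by omega
        have he2 : w2 = (⟨1, by omega⟩ : Fin q) := Fin.ext hw2
        rw [he2] at hw
        exact ⟨by omega, hw⟩
    have hCL : ∀ (j : ℕ), j + 1 < q → ∀ i : ZMod p, par i = 0 →
        (¬ χ j i ∧ ¬ χ (j+1) i) → (¬ χ j (i+1) ∧ ¬ χ (j+1) (i+1)) := by
      intro j hlt i hpar hni
      obtain ⟨⟨w1, w2⟩, hw⟩ := Npart (i, (⟨j + 1, hlt⟩ : Fin q))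
      rcases boxProd_adj.mp (N.adj_sub hw) with ⟨hcyc, h2⟩ | ⟨hpath, h2⟩
      · have h2' : (⟨j + 1, hlt⟩ : Fin q) = w2 := h2
        subst h2'
        have hcycA : i = w1 + 1 ∨ w1 = i + 1 := hcyc.2
        rcases hcycA with hor | hor
        · exfalso
          refine hdisj ((hMhadj (i, ⟨j + 1, hlt⟩) (w1, ⟨j + 1, hlt⟩)).mpr
            ⟨rfl, Or.inr ⟨hor, ?_⟩⟩) hw
          show par w1 = ε ⟨j + 1, hlt⟩
          rw [hε1 j hlt]
          have hcalc : par i = par w1 + 1 := by rw [hor, parsucc]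
          exact z2c _ (hcalc.symm.trans hpar)
        · subst hor
          exact ⟨hnov (N.adj_symm hw) j (Or.inr rfl), hnov (N.adj_symm hw) (j+1) (Or.inl rfl)⟩
      · exfalso
        have h2' : i = w1 := h2
        subst h2'
        have h01 : (j + 1) + 1 = w2.val ∨ w2.val + 1 = j + 1 := pathGraph_adj.mp hpath
        rcases h01 with h01 | h01
        · apply hni.2
          have hlt2 : (j + 1) + 1 < q := by rw [h01]; exact w2.isLt
          have he2 : w2 = (⟨(j + 1) + 1, hlt2⟩ : Fin q) := Fin.ext h01.symm
          rw [he2] at hw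
          exact ⟨hlt2, hw⟩
        · apply hni.1
          have hw2 : w2.val = j := by omega
          have he2 : w2 = (⟨j, Nat.lt_of_succ_lt hlt⟩ : Fin q) := Fin.ext hw2
          rw [he2] at hw
          exact ⟨hlt, N.adj_symm hw⟩
    have hCL' : ∀ (j : ℕ), j + 1 < q → ∀ i : ZMod p, par i = 0 →
        (¬ χ j (i+1) ∧ ¬ χ (j+1) (i+1)) → (¬ χ j i ∧ ¬ χ (j+1) i) := by
      intro j hlt i hpar hni
      obtain ⟨⟨w1, w2⟩, hw⟩ := Npart (i + 1, (⟨j + 1, hlt⟩ : Fin q))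
      rcases boxProd_adj.mp (N.adj_sub hw) with ⟨hcyc, h2⟩ | ⟨hpath, h2⟩
      · have h2' : (⟨j + 1, hlt⟩ : Fin q) = w2 := h2
        subst h2'
        have hcycA : i + 1 = w1 + 1 ∨ w1 = (i + 1) + 1 := hcyc.2
        rcases hcycA with hor | hor
        · have hw1 : w1 = i := add_right_cancel hor.symm
          subst hw1
          exact ⟨hnov (N.adj_symm hw) j (Or.inr rfl), hnov (N.adj_symm hw) (j+1) (Or.inl rfl)⟩
        · exfalso
          refine hdisj ((hMhadj (i + 1, ⟨j + 1, hlt⟩) (w1, ⟨j + 1, hlt⟩)).mpr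
            ⟨rfl, Or.inl ⟨hor, ?_⟩⟩) hw
          show par (i + 1) = ε ⟨j + 1, hlt⟩
          rw [hε1 j hlt, parsucc]
          exact z2d _ hpar
      · exfalso
        have h2' : i + 1 = w1 := h2
        subst h2'
        have h01 : (j + 1) + 1 = w2.val ∨ w2.val + 1 = j + 1 := pathGraph_adj.mp hpath
        rcases h01 with h01 | h01
        · apply hni.2
          have hlt2 : (j + 1) + 1 < q := by rw [h01]; exact w2.isLt
          have he2 : w2 = (⟨(j + 1) + 1, hlt2⟩ : Fin q) := Fin.ext h01.symm
          rw [he2] at hw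
          exact ⟨hlt2, hw⟩
        · apply hni.1
          have hw2 : w2.val = j := by omega
          have he2 : w2 = (⟨j, Nat.lt_of_succ_lt hlt⟩ : Fin q) := Fin.ext hw2
          rw [he2] at hw
          exact ⟨hlt, N.adj_symm hw⟩
    have hEC : ∀ (t j : ℕ), j + 1 + t = q → ∀ i : ZMod p, par i = 0 → (χ j i ↔ χ j (i+1)) := by
      intro t
      induction t with
      | zero =>
        intro j hjq i _
        constructor <;> (rintro ⟨h, -⟩; omega)
      | succ t ih =>
        intro j hjq i hpar
        have hlt : j + 1 < q := by omega
        have hI : χ (j+1) i ↔ χ (j+1) (i+1) := ih (j+1) (by omega) i hpar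
        have hAfwd : (χ j i ∨ χ (j+1) i) → (χ j (i+1) ∨ χ (j+1) (i+1)) := by
          intro hA
          by_contra hn
          push_neg at hn
          rcases hCL' j hlt i hpar ⟨hn.1, hn.2⟩ with ⟨ha, hb⟩
          rcases hA with h | h
          · exact ha h
          · exact hb h
        have hAbwd : (χ j (i+1) ∨ χ (j+1) (i+1)) → (χ j i ∨ χ (j+1) i) := by
          intro hA
          by_contra hn
          push_neg at hn
          rcases hCL j hlt i hpar ⟨hn.1, hn.2⟩ with ⟨ha, hb⟩
          rcases hA with h | h
          · exact ha h
          · exact hb h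
        constructor
        · intro hχ
          rcases hAfwd (Or.inl hχ) with h | h
          · exact h
          · exact absurd (hI.mpr h) (hD j i hχ)
        · intro hχ
          rcases hAbwd (Or.inl hχ) with h | h
          · exact h
          · exact absurd (hI.mp h) (hD j (i+1) hχ)
    have hstep : ∀ i : ZMod p, χ 0 i ↔ χ 0 (i+1) := by
      intro i
      rcases (show ∀ a : ZMod 2, a = 0 ∨ a = 1 by decide) (par i) with h | h
      · exact hEC (q - 1) 0 (by omega) i h
      · constructor
        · intro hx
          by_contra hn
          exact hC0' i h hn hx
        · intro hx
          by_contra hn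
          exact hC0 i h hn hx
    have hconst : ∀ i : ZMod p, χ 0 i ↔ χ 0 0 := by
      have hnat : ∀ n : ℕ, χ 0 (n : ZMod p) ↔ χ 0 0 := by
        intro n
        induction n with
        | zero => rw [Nat.cast_zero]
        | succ n ih =>
          rw [Nat.cast_succ, ← hstep]
          exact ih
      intro i
      have hv : ((i.val : ℕ) : ZMod p) = i := by
        simp [ZMod.natCast_val, ZMod.cast_id]
      rw [← hv]
      exact hnat i.val
    by_cases h0 : χ 0 0
    · obtain ⟨u, v, hu, hv, he⟩ := ham_crossing hc {x : ZMod p × Fin q | x.2.val ≤ 1}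
          (x := ((0:ZMod p), (⟨0, h0q⟩ : Fin q))) (y := ((0:ZMod p), (⟨2, by omega⟩ : Fin q)))
          (show (0:ℕ) ≤ 1 by omega) (show ¬ (2:ℕ) ≤ 1 by omega)
      obtain ⟨u1, u2⟩ := u
      obtain ⟨v1, v2⟩ := v
      have hu' : u2.val ≤ 1 := hu
      have hv' : ¬ v2.val ≤ 1 := hv
      rcases hedge he with hm | hn
      · have h2' : u2 = v2 := ((hMhadj _ _).mp hm).1
        exact hv' (h2' ▸ hu')
      · rcases boxProd_adj.mp (N.adj_sub hn) with ⟨-, h2⟩ | ⟨hpath, h2⟩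
        · have h2' : u2 = v2 := h2
          exact hv' (h2' ▸ hu')
        · have h2' : u1 = v1 := h2
          subst h2'
          have hp2 : u2.val + 1 = v2.val ∨ v2.val + 1 = u2.val := pathGraph_adj.mp hpath
          have hu2 : u2.val = 1 := by omega
          have hv2 : v2.val = 2 := by omega
          have hq2 : 1 + 1 < q := by omega
          have e1 : u2 = (⟨1, by omega⟩ : Fin q) := Fin.ext hu2
          have e2 : v2 = (⟨2, by omega⟩ : Fin q) := Fin.ext hv2
          rw [e1, e2] at hn
          exact hD 0 u1 ((hconst u1).mpr h0) ⟨hq2, hn⟩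
    · obtain ⟨u, v, hu, hv, he⟩ := ham_crossing hc {x : ZMod p × Fin q | x.2.val = 0}
          (x := ((0:ZMod p), (⟨0, h0q⟩ : Fin q))) (y := ((0:ZMod p), (⟨1, by omega⟩ : Fin q)))
          (show (0:ℕ) = 0 from rfl) (show ¬ (1:ℕ) = 0 by omega)
      obtain ⟨u1, u2⟩ := u
      obtain ⟨v1, v2⟩ := v
      have hu' : u2.val = 0 := hu
      have hv' : ¬ v2.val = 0 := hv
      rcases hedge he with hm | hn
      · have h2' : u2 = v2 := ((hMhadj _ _).mp hm).1
        exact hv' (h2' ▸ hu')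
      · rcases boxProd_adj.mp (N.adj_sub hn) with ⟨-, h2⟩ | ⟨hpath, h2⟩
        · have h2' : u2 = v2 := h2
          exact hv' (h2' ▸ hu')
        · have h2' : u1 = v1 := h2
          subst h2'
          have hp2 : u2.val + 1 = v2.val ∨ v2.val + 1 = u2.val := pathGraph_adj.mp hpath
          have hv2 : v2.val = 1 := by omega
          have e1 : u2 = (⟨0, h0q⟩ : Fin q) := Fin.ext hu'
          have e2 : v2 = (⟨1, by omega⟩ : Fin q) := Fin.ext hv2
          rw [e1, e2] at hn
          exact h0 ((hconst u1).mp ⟨by omega, hn⟩)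
  rcases Nat.even_or_odd q with hqe | hqo
  · -- p odd, q even : all-vertical matching
    have hMv : ∃ Mv : (cycGraph p □ SimpleGraph.pathGraph q).Subgraph,
        Mv.IsPerfectMatching ∧
        (∀ (i : ZMod p) (j l : Fin q), Mv.Adj (i, j) (i, l) → l.val = j.val + 1 ∨ j.val = l.val + 1) ∧
        (∀ (i : ZMod p), Mv.Adj (i, ⟨0, by omega⟩) (i, ⟨1, by omega⟩)) ∧
        (∀ (x y : ZMod p × Fin q), Mv.Adj x y → x.1 = y.1) := by
      refine ⟨{ verts := Set.univ
                Adj := fun x y => x.1 = y.1 ∧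
                  ((y.2.val = x.2.val + 1 ∧ x.2.val % 2 = 0) ∨
                   (x.2.val = y.2.val + 1 ∧ y.2.val % 2 = 0))
                adj_sub := ?_
                edge_vert := fun _ => Set.mem_univ _
                symm := ?_ }, ⟨?_, fun v => Set.mem_univ _⟩, ?_, ?_, ?_⟩
      · rintro ⟨i, j⟩ ⟨k, l⟩ ⟨h1, h2⟩
        dsimp at h1 h2
        subst h1
        refine boxProd_adj.mpr (Or.inr ⟨pathGraph_adj.mpr ?_, rfl⟩)
        dsimp only
        omega
      · refine ⟨?_⟩
        rintro ⟨i, j⟩ ⟨k, l⟩ ⟨h1, h2⟩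
        exact ⟨h1.symm, h2.symm⟩
      · rintro ⟨i, j⟩ -
        obtain ⟨b, hb⟩ := hqe
        by_cases hj : j.val % 2 = 0
        · have hj1 : j.val + 1 < q := by have := j.isLt; omega
          refine ⟨(i, ⟨j.val + 1, hj1⟩), ⟨rfl, Or.inl ⟨rfl, hj⟩⟩, ?_⟩
          rintro ⟨k, l⟩ ⟨h1, h2⟩
          dsimp at h1 h2
          subst h1
          rcases h2 with ⟨ha, _⟩ | ⟨ha, hb'⟩
          · exact Prod.ext rfl (Fin.ext (show (l:ℕ) = j.val + 1 from by omega))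
          · omega
        · have hj1 : 1 ≤ j.val := by omega
          refine ⟨(i, ⟨j.val - 1, by omega⟩), ⟨rfl, Or.inr ⟨show (j:ℕ) = (j.val - 1) + 1 from by omega, show (j.val - 1) % 2 = 0 from by omega⟩⟩, ?_⟩
          rintro ⟨k, l⟩ ⟨h1, h2⟩
          dsimp at h1 h2
          subst h1
          rcases h2 with ⟨ha, hb'⟩ | ⟨ha, hb'⟩
          · omega
          · exact Prod.ext rfl (Fin.ext (show (l:ℕ) = j.val - 1 from by omega))
      · rintro i j l ⟨-, h2⟩
        dsimp at h2
        omega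
      · intro i
        exact ⟨rfl, Or.inl ⟨rfl, rfl⟩⟩
      · rintro ⟨i, j⟩ ⟨k, l⟩ ⟨h1, -⟩
        exact h1
    obtain ⟨Mv, hMv, hMvvert, hMv01, hMvfst⟩ := hMv
    obtain ⟨N, hN, v0, c, hc, hE⟩ := hext Mv hMv
    have hdisj : ∀ {x y}, Mv.Adj x y → N.Adj x y → False :=
      fun hm hn => matchings_disjoint hc hMv hN hE hm hn
    -- build a matching on cycGraph p from N restricted to layer 0
    have h0q : 0 < q := by omega
    let z : Fin q := ⟨0, h0q⟩
    let N0 : (cycGraph p).Subgraph :=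
      { verts := Set.univ
        Adj := fun a b => N.Adj (a, z) (b, z)
        adj_sub := by
          intro a b h
          rcases boxProd_adj.mp (N.adj_sub h) with ⟨h1, -⟩ | ⟨h1, -⟩
          · exact h1
          · exact absurd h1 (SimpleGraph.irrefl _)
        edge_vert := fun _ => Set.mem_univ _
        symm := ⟨fun a b h => N.adj_symm h⟩ }
    have hN0 : N0.IsMatching := by
      rintro a -
      obtain ⟨⟨w1, w2⟩, hw, huniq⟩ := hN.1 (hN.2 (a, z))
      rcases boxProd_adj.mp (N.adj_sub hw) with ⟨h1, h2⟩ | ⟨h1, h2⟩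
      · dsimp at h1 h2
        refine ⟨w1, ?_, ?_⟩
        · show N.Adj (a, z) (w1, z)
          rw [← h2] at hw
          exact hw
        · intro b hb
          have := huniq (b, z) hb
          exact (congrArg Prod.fst this)
      · exfalso
        dsimp at h1 h2
        have hz : z.val = 0 := rfl
        have hw2 : w2.val = 1 := by
          have := pathGraph_adj.mp h1
          omega
        apply hdisj ?_ hw
        subst h2
        have : w2 = (⟨1, by omega⟩ : Fin q) := Fin.ext hw2
        rw [this]
        exact hMv01 a
    haveI : Fintype (N0.verts : Set (ZMod p)) := Set.fintypeUniv
    have heven := hN0.even_card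
    have hcard : N0.verts.toFinset.card = p := by
      show (Set.univ : Set (ZMod p)).toFinset.card = p
      rw [Set.toFinset_univ, Finset.card_univ, ZMod.card]
    rw [hcard] at heven
    exact (Nat.not_even_iff_odd.mpr hpo) heven
  · -- p odd, q odd : no perfect matching at all
    have heven := hM₀.even_card
    rw [Fintype.card_prod, ZMod.card, Fintype.card_fin] at heven
    have : Odd (p * q) := Nat.odd_mul.mpr ⟨hpo, hqo⟩
    exact (Nat.not_even_iff_odd.mpr this) heven
end

section
/- For p even, p ≥ 4, and q ≥ 3, the perfect matching M of C_p □ P_q consisting of the edges (i,q−1)(i+1,q−1) for every odd i, the edges (i−1,q)(i,q) for every odd i, together with a suitable completion to a perfect matching on the remaining vertices, cannot be extended to a Hamiltonian cycle of C_p □ P_q. -/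
open SimpleGraph

private lemma walk_side_aux {V : Type*} {G : SimpleGraph V} {W : Set V} :
    ∀ {u w : V} (P : G.Walk u w),
      (∀ x y : V, s(x, y) ∈ P.edges → (x ∈ W ↔ y ∈ W)) →
      ∀ z ∈ P.support, (z ∈ W ↔ u ∈ W) := by
  intro u w P
  induction P with
  | nil =>
    intro _ z hz
    rw [SimpleGraph.Walk.support_nil, List.mem_singleton] at hz
    subst hz; exact Iff.rfl
  | @cons a t w h P ih =>
    intro hE z hz
    rw [SimpleGraph.Walk.support_cons, List.mem_cons] at hz
    have h1 : (a ∈ W ↔ t ∈ W) :=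
      hE a t (by rw [SimpleGraph.Walk.edges_cons]; exact List.mem_cons_self)
    rcases hz with rfl | hz
    · exact Iff.rfl
    · have h2 := ih (fun x y hxy =>
        hE x y (by rw [SimpleGraph.Walk.edges_cons]; exact List.mem_cons_of_mem _ hxy)) z hz
      exact h2.trans h1.symm

/-- For even `p ≥ 4` and `q ≥ 3`, any perfect matching of `C_p □ P_q` containing the
edges `(i, q-1)(i+1, q-1)` and `(i-1, q)(i, q)` for every odd `i ∈ [p]` (columns of the
path labelled `1, …, q`) cannot be extended to a Hamiltonian cycle. -/
theorem stmt_7 (p q : ℕ) (hp : Even p) (hp4 : 4 ≤ p) (hq : 3 ≤ q)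
    (M : (cycGraph p □ SimpleGraph.pathGraph q).Subgraph)
    (hM : M.IsPerfectMatching)
    (hrow1 : ∀ i : ℕ, Odd i → i ≤ p →
      s(((i : ZMod p), (⟨q - 2, by omega⟩ : Fin q)),
        ((i + 1 : ℕ), (⟨q - 2, by omega⟩ : Fin q))) ∈ M.edgeSet)
    (hrow2 : ∀ i : ℕ, Odd i → i ≤ p →
      s((((i : ZMod p) - 1), (⟨q - 1, by omega⟩ : Fin q)),
        ((i : ZMod p), (⟨q - 1, by omega⟩ : Fin q))) ∈ M.edgeSet) :
    ¬ ExtendsToHamCycle (cycGraph p □ SimpleGraph.pathGraph q) M := by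
  haveI : NeZero p := ⟨by omega⟩
  haveI : Fact (1 < p) := ⟨by omega⟩
  set rA : Fin q := ⟨q - 1, by omega⟩ with hrAdef
  set rB : Fin q := ⟨q - 2, by omega⟩ with hrBdef
  set r0 : Fin q := ⟨0, by omega⟩ with hr0def
  have hrAval : (rA : ℕ) = q - 1 := by rw [hrAdef]
  have hrBval : (rB : ℕ) = q - 2 := by rw [hrBdef]
  have hr0val : (r0 : ℕ) = 0 := by rw [hr0def]
  intro hext
  obtain ⟨N, hN, v, c, hc, hE⟩ := hext
  -- uniqueness of matching partners
  have hMex := SimpleGraph.Subgraph.isPerfectMatching_iff.mp hM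
  have hNex := SimpleGraph.Subgraph.isPerfectMatching_iff.mp hN
  have Mu : ∀ x y z : ZMod p × Fin q, M.Adj x y → M.Adj x z → y = z := by
    intro x y z h1 h2
    obtain ⟨w, -, hw⟩ := hMex x
    rw [hw y h1, hw z h2]
  have Nu : ∀ x y z : ZMod p × Fin q, N.Adj x y → N.Adj x z → y = z := by
    intro x y z h1 h2
    obtain ⟨w, -, hw⟩ := hNex x
    rw [hw y h1, hw z h2]
  -- the known matching edges of M in the two last rows
  have hMA : ∀ j : ZMod p, Odd j.val → M.Adj (j - 1, rA) (j, rA) := by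
    intro j hj
    have h := hrow2 j.val hj (ZMod.val_lt j).le
    rw [SimpleGraph.Subgraph.mem_edgeSet] at h
    have hcast : ((j.val : ℕ) : ZMod p) = j := by rw [ZMod.natCast_val, ZMod.cast_id]
    rw [hcast] at h
    exact h
  have hMB : ∀ j : ZMod p, Odd j.val → M.Adj (j, rB) (j + 1, rB) := by
    intro j hj
    have h := hrow1 j.val hj (ZMod.val_lt j).le
    rw [SimpleGraph.Subgraph.mem_edgeSet] at h
    have hcast : ((j.val : ℕ) : ZMod p) = j := by rw [ZMod.natCast_val, ZMod.cast_id]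
    rw [Nat.cast_add, Nat.cast_one, hcast] at h
    exact h
  -- parity bookkeeping
  have hpar : ∀ j : ZMod p, ((j + 1).val) % 2 = (j.val + 1) % 2 := by
    intro j
    rw [ZMod.val_add, ZMod.val_one]
    exact Nat.mod_mod_of_dvd _ hp.two_dvd
  have hOE : ∀ j : ZMod p, Odd j.val → Even (j + 1).val := by
    intro j hj
    have h := hpar j
    rw [Nat.odd_iff] at hj
    rw [Nat.even_iff]
    omega
  have hEO : ∀ j : ZMod p, Even j.val → Odd (j + 1).val := by
    intro j hj
    have h := hpar j
    rw [Nat.even_iff] at hj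
    rw [Nat.odd_iff]
    omega
  have hEOsub : ∀ j : ZMod p, Even j.val → Odd (j - 1).val := by
    intro j hj
    have h := hpar (j - 1)
    have e : j - 1 + 1 = j := by ring
    rw [e] at h
    rw [Nat.even_iff] at hj
    rw [Nat.odd_iff]
    omega
  -- neighbours of a vertex in the last row
  have nbrA : ∀ (j : ZMod p) (b : ZMod p × Fin q),
      (cycGraph p □ SimpleGraph.pathGraph q).Adj (j, rA) b →
      b = (j - 1, rA) ∨ b = (j + 1, rA) ∨ b = (j, rB) := by
    intro j b hadj
    obtain ⟨b1, b2⟩ := b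
    rw [SimpleGraph.boxProd_adj] at hadj
    rcases hadj with ⟨hcyc, hsnd⟩ | ⟨hpath, hfst⟩
    · have hsnd' : rA = b2 := hsnd
      subst hsnd'
      have hor : j = b1 + 1 ∨ b1 = j + 1 := (show j ≠ b1 ∧ (j = b1 + 1 ∨ b1 = j + 1) from hcyc).2
      rcases hor with h1 | h1
      · left
        have hb1 : b1 = j - 1 := by rw [h1]; ring
        rw [hb1]
      · right; left
        rw [h1]
    · have hfst' : j = b1 := hfst
      subst hfst'
      have hpath' : (SimpleGraph.pathGraph q).Adj rA b2 := hpath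
      rw [SimpleGraph.pathGraph_adj] at hpath'
      rcases hpath' with h | h
      · exfalso
        rw [hrAval] at h
        have := b2.isLt
        omega
      · right; right
        have hb2 : b2 = rB := by
          apply Fin.ext
          rw [hrBval]
          rw [hrAval] at h
          omega
        rw [hb2]
  -- the connectivity contradiction machine
  have key : ∀ W : Set (ZMod p × Fin q),
      (∀ a b, M.Adj a b → a ∈ W → b ∈ W) →
      (∀ a b, N.Adj a b → a ∈ W → b ∈ W) →
      ∀ a b : ZMod p × Fin q, a ∈ W → b ∉ W → False := by
    intro W hMW hNW a b ha hb
    have hedge : ∀ x y : ZMod p × Fin q, s(x, y) ∈ c.edges → (x ∈ W ↔ y ∈ W) := by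
      intro x y hxy
      have hmem : s(x, y) ∈ M.edgeSet ∪ N.edgeSet := by
        rw [← hE]; exact hxy
      rcases (Set.mem_union _ _ _).mp hmem with h | h
      · rw [SimpleGraph.Subgraph.mem_edgeSet] at h
        exact ⟨hMW x y h, hMW y x h.symm⟩
      · rw [SimpleGraph.Subgraph.mem_edgeSet] at h
        exact ⟨hNW x y h, hNW y x h.symm⟩
    have hs := walk_side_aux c hedge
    exact hb (((hs b (hc.mem_support b)).trans (hs a (hc.mem_support a)).symm).mpr ha)
  -- M and N cannot share an edge inside the last row
  have pairKey : ∀ x y : ZMod p × Fin q, x.2 = rA → y.2 = rA →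
      M.Adj x y → N.Adj x y → False := by
    intro x y hx hy hm hn
    refine key {x, y} ?_ ?_ x (x.1, r0) (Set.mem_insert x {y}) ?_
    · intro a b hab haW
      rw [Set.mem_insert_iff, Set.mem_singleton_iff] at haW
      rw [Set.mem_insert_iff, Set.mem_singleton_iff]
      rcases haW with rfl | rfl
      · exact Or.inr (Mu a b y hab hm)
      · exact Or.inl (Mu a b x hab hm.symm)
    · intro a b hab haW
      rw [Set.mem_insert_iff, Set.mem_singleton_iff] at haW
      rw [Set.mem_insert_iff, Set.mem_singleton_iff]
      rcases haW with rfl | rfl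
      · exact Or.inr (Nu a b y hab hn)
      · exact Or.inl (Nu a b x hab hn.symm)
    · intro hmem
      rw [Set.mem_insert_iff, Set.mem_singleton_iff] at hmem
      rcases hmem with h | h
      · have h2 : ((x.1, r0) : ZMod p × Fin q).2.val = x.2.val := congrArg (fun z : ZMod p × Fin q => z.2.val) h
        rw [hx] at h2
        have h3 : r0.val = rA.val := h2
        rw [hr0val, hrAval] at h3
        omega
      · have h2 : ((x.1, r0) : ZMod p × Fin q).2.val = y.2.val := congrArg (fun z : ZMod p × Fin q => z.2.val) h
        rw [hy] at h2
        have h3 : r0.val = rA.val := h2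
        rw [hr0val, hrAval] at h3
        omega
  have hABval : rA.val ≠ rB.val := by rw [hrAval, hrBval]; omega
  -- closure of vertical N-edges under the shift forced by M
  have clo_odd : ∀ j : ZMod p, Odd j.val → N.Adj (j, rA) (j, rB) →
      N.Adj (j + 1, rA) (j + 1, rB) := by
    intro j hj hv
    obtain ⟨y, hy, -⟩ := hNex (j + 1, rA)
    rcases nbrA (j + 1) y (N.adj_sub hy) with h1 | h1 | h1
    · exfalso
      have e : j + 1 - 1 = j := by ring
      rw [e] at h1
      subst h1
      have h2 := Nu (j, rA) (j + 1, rA) (j, rB) hy.symm hv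
      have h3 : rA.val = rB.val := congrArg (fun z : ZMod p × Fin q => z.2.val) h2
      exact hABval h3
    · exfalso
      subst h1
      have hodd2 : Odd (j + 1 + 1).val := hEO (j + 1) (hOE j hj)
      have hm := hMA (j + 1 + 1) hodd2
      have e : j + 1 + 1 - 1 = j + 1 := by ring
      rw [e] at hm
      exact pairKey (j + 1, rA) (j + 1 + 1, rA) rfl rfl hm hy
    · rw [h1] at hy
      exact hy
  have clo_even : ∀ j : ZMod p, Even j.val → N.Adj (j, rA) (j, rB) →
      N.Adj (j - 1, rA) (j - 1, rB) := by
    intro j hj hv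
    obtain ⟨y, hy, -⟩ := hNex (j - 1, rA)
    rcases nbrA (j - 1) y (N.adj_sub hy) with h1 | h1 | h1
    · exfalso
      subst h1
      have hodd : Odd (j - 1).val := hEOsub j hj
      have hm := (hMA (j - 1) hodd).symm
      exact pairKey (j - 1, rA) (j - 1 - 1, rA) rfl rfl hm hy
    · exfalso
      have e : j - 1 + 1 = j := by ring
      rw [e] at h1
      subst h1
      have h2 := Nu (j, rA) (j - 1, rA) (j, rB) hy.symm hv
      have h3 : rA.val = rB.val := congrArg (fun z : ZMod p × Fin q => z.2.val) h2
      exact hABval h3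
    · rw [h1] at hy
      exact hy
  -- the closed set W
  set W : Set (ZMod p × Fin q) :=
    {x | x.2 = rA ∨ (x.2 = rB ∧ N.Adj (x.1, rA) (x.1, rB))} with hWdef
  have memW : ∀ x : ZMod p × Fin q,
      x ∈ W ↔ (x.2 = rA ∨ (x.2 = rB ∧ N.Adj (x.1, rA) (x.1, rB))) := fun x => Iff.rfl
  have cM : ∀ a b, M.Adj a b → a ∈ W → b ∈ W := by
    intro a b hab haW
    obtain ⟨j, r⟩ := a
    rcases (memW _).mp haW with h | ⟨h, hv⟩
    · have h' : r = rA := h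
      subst h'
      rcases Nat.even_or_odd j.val with hj | hj
      · have h1 := hMA (j + 1) (hEO j hj)
        have e : j + 1 - 1 = j := by ring
        rw [e] at h1
        have hb := Mu (j, rA) b (j + 1, rA) hab h1
        exact (memW b).mpr (Or.inl (by rw [hb]))
      · have h1 := (hMA j hj).symm
        have hb := Mu (j, rA) b (j - 1, rA) hab h1
        exact (memW b).mpr (Or.inl (by rw [hb]))
    · have h' : r = rB := h
      subst h'
      have hv' : N.Adj (j, rA) (j, rB) := hv
      rcases Nat.even_or_odd j.val with hj | hj
      · have h1 := hMB (j - 1) (hEOsub j hj)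
        have e : j - 1 + 1 = j := by ring
        rw [e] at h1
        have hb := Mu (j, rB) b (j - 1, rB) hab h1.symm
        refine (memW b).mpr (Or.inr ?_)
        rw [hb]
        exact ⟨rfl, clo_even j hj hv'⟩
      · have hb := Mu (j, rB) b (j + 1, rB) hab (hMB j hj)
        refine (memW b).mpr (Or.inr ?_)
        rw [hb]
        exact ⟨rfl, clo_odd j hj hv'⟩
  have cN : ∀ a b, N.Adj a b → a ∈ W → b ∈ W := by
    intro a b hab haW
    obtain ⟨j, r⟩ := a
    rcases (memW _).mp haW with h | ⟨h, hv⟩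
    · have h' : r = rA := h
      subst h'
      rcases nbrA j b (N.adj_sub hab) with h1 | h1 | h1
      · subst h1; exact (memW _).mpr (Or.inl rfl)
      · subst h1; exact (memW _).mpr (Or.inl rfl)
      · subst h1; exact (memW _).mpr (Or.inr ⟨rfl, hab⟩)
    · have h' : r = rB := h
      subst h'
      have hv' : N.Adj (j, rA) (j, rB) := hv
      have hb := Nu (j, rB) b (j, rA) hab hv'.symm
      exact (memW b).mpr (Or.inl (by rw [hb]))
  refine key W cM cN (0, rA) (0, r0) ((memW _).mpr (Or.inl rfl)) ?_
  intro hmem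
  rcases (memW _).mp hmem with h | ⟨h, -⟩
  · have h3 : r0.val = rA.val := congrArg Fin.val h
    rw [hr0val, hrAval] at h3
    omega
  · have h3 : r0.val = rB.val := congrArg Fin.val h
    rw [hr0val, hrBval] at h3
    omega
end

section
/- For every even p ≥ 6, the graph C_p □ C_3 does not have the PMH-property. -/
open SimpleGraph

/-! ### Auxiliary material for the proof -/

set_option linter.unusedSectionVars false
set_option linter.unusedVariables false
set_option maxHeartbeats 1000000

section WalkAux
variable {V : Type*} [DecidableEq V] {G : SimpleGraph V}

lemma pmh_cross_of_ends {S : Set V} : ∀ {a b : V} (w : G.Walk a b), a ∈ S → b ∉ S →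
    ∃ u v, s(u,v) ∈ w.edges ∧ u ∈ S ∧ v ∉ S := by
  intro a b w
  induction w with
  | nil => intro ha hb; exact absurd ha hb
  | @cons a c b h q ih =>
    intro ha hb
    by_cases hc : c ∈ S
    · obtain ⟨u, v, he, h1, h2⟩ := ih hc hb
      exact ⟨u, v, List.mem_cons_of_mem _ he, h1, h2⟩
    · exact ⟨a, c, List.mem_cons_self, ha, hc⟩

lemma pmh_cross_of_closed {S : Set V} {v : V} (c : G.Walk v v) {x y : V}
    (hx : x ∈ c.support) (hy : y ∈ c.support) (hxS : x ∈ S) (hyS : y ∉ S) :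
    ∃ u w, s(u,w) ∈ c.edges ∧ u ∈ S ∧ w ∉ S := by
  have hy' : y ∈ (c.rotate x hx).support := by
    have h1 := c.take_spec hx
    have h2 : y ∈ ((c.takeUntil x hx).append (c.dropUntil x hx)).support := by rw [h1]; exact hy
    rw [Walk.mem_support_append_iff] at h2
    rw [Walk.rotate, Walk.mem_support_append_iff]
    tauto
  obtain ⟨u, w, he, h1, h2⟩ := pmh_cross_of_ends ((c.rotate x hx).takeUntil y hy') hxS hyS
  exact ⟨u, w, ((c.rotate_edges x hx).mem_iff).1 (Walk.edges_takeUntil_subset _ _ he), h1, h2⟩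

lemma pmh_exists_last_edge : ∀ {a b : V} (w : G.Walk a b), a ≠ b → ∃ z, s(z,b) ∈ w.edges := by
  intro a b w
  induction w with
  | nil => intro h; exact absurd rfl h
  | @cons a c b h q ih =>
    intro _
    by_cases hc : c = b
    · subst hc; exact ⟨a, List.mem_cons_self⟩
    · obtain ⟨z, hz⟩ := ih hc
      exact ⟨z, List.mem_cons_of_mem _ hz⟩

lemma pmh_cycle_two_edges {x : V} (c : G.Walk x x) (hc : c.IsCycle) :
    ∃ a b, a ≠ b ∧ s(x,a) ∈ c.edges ∧ s(x,b) ∈ c.edges := by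
  cases c with
  | nil => exact absurd rfl hc.ne_nil
  | @cons _ y _ h q =>
    obtain ⟨z, hz⟩ := pmh_exists_last_edge q (G.ne_of_adj h).symm
    refine ⟨y, z, ?_, List.mem_cons_self, ?_⟩
    · rintro rfl
      have hnd := hc.edges_nodup
      rw [Walk.edges_cons, List.nodup_cons] at hnd
      exact hnd.1 (by rwa [Sym2.eq_swap])
    · exact List.mem_cons_of_mem _ (by rwa [Sym2.eq_swap] at hz)

/-- The crossing indicator of an edge w.r.t. a boolean vertex labelling. -/
def pmhCrossB (ind : V → Bool) : Sym2 V → Bool :=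
  Sym2.lift ⟨fun u v => xor (ind u) (ind v), fun u v => Bool.xor_comm _ _⟩

lemma pmh_parity_cross (ind : V → Bool) : ∀ {a b : V} (w : G.Walk a b),
    (w.edges.countP (pmhCrossB ind)) % 2 = (if ind a = ind b then 0 else 1) := by
  intro a b w
  induction w with
  | nil => simp
  | @cons a c b h q ih =>
    rw [Walk.edges_cons, List.countP_cons]
    have hx : pmhCrossB ind s(a, c) = xor (ind a) (ind c) := rfl
    rw [hx]
    cases ha : ind a <;> cases hcc : ind c <;> cases hb : ind b <;>
      simp_all <;> omega

lemma pmh_parity_cross_closed (ind : V → Bool) {v : V} (c : G.Walk v v) :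
    (c.edges.countP (pmhCrossB ind)) % 2 = 0 := by
  rw [pmh_parity_cross ind c]; simp

end WalkAux

section ListAux
variable {α : Type*} [DecidableEq α] {pr : α → Bool}

lemma pmh_countP_le_of_subset {l : List α} (hl : l.Nodup) (t : Finset α)
    (h : ∀ a ∈ l, pr a = true → a ∈ t) : l.countP pr ≤ t.card := by
  rw [List.countP_eq_length_filter]
  rw [← List.toFinset_card_of_nodup (hl.filter pr)]
  apply Finset.card_le_card
  intro a ha
  rw [List.mem_toFinset, List.mem_filter] at ha
  exact h a ha.1 ha.2

lemma pmh_le_countP_of_superset {l : List α} (t : Finset α)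
    (h : ∀ a ∈ t, a ∈ l ∧ pr a = true) : t.card ≤ l.countP pr := by
  rw [List.countP_eq_length_filter]
  calc t.card ≤ (l.filter pr).toFinset.card := by
        apply Finset.card_le_card
        intro a ha
        rw [List.mem_toFinset, List.mem_filter]
        exact ⟨(h a ha).1, (h a ha).2⟩
    _ ≤ (l.filter pr).length := List.toFinset_card_le _

lemma pmh_countP_le_three {l : List α} (hl : l.Nodup) (e1 e2 e3 : α)
    (h : ∀ a ∈ l, pr a = true → a = e1 ∨ a = e2 ∨ a = e3) : l.countP pr ≤ 3 := by
  refine le_trans (pmh_countP_le_of_subset hl {e1, e2, e3} ?_) ?_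
  · intro a ha hpa
    rcases h a ha hpa with rfl | rfl | rfl <;> simp
  · refine (Finset.card_insert_le _ _).trans (Nat.add_le_add_right ?_ 1)
    refine (Finset.card_insert_le _ _).trans (Nat.add_le_add_right ?_ 1)
    simp

lemma pmh_countP_le_two {l : List α} (hl : l.Nodup) (e1 e2 : α)
    (h : ∀ a ∈ l, pr a = true → a = e1 ∨ a = e2) : l.countP pr ≤ 2 := by
  refine le_trans (pmh_countP_le_of_subset hl {e1, e2} ?_) ?_
  · intro a ha hpa
    rcases h a ha hpa with rfl | rfl <;> simp
  · refine (Finset.card_insert_le _ _).trans (Nat.add_le_add_right ?_ 1)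
    simp

lemma pmh_countP_le_one {l : List α} (hl : l.Nodup) (e1 : α)
    (h : ∀ a ∈ l, pr a = true → a = e1) : l.countP pr ≤ 1 := by
  refine le_trans (pmh_countP_le_of_subset hl {e1} ?_) ?_
  · intro a ha hpa
    rw [h a ha hpa]; simp
  · simp

lemma pmh_two_le_countP {l : List α} (e1 e2 : α) (h1 : e1 ∈ l) (h2 : e2 ∈ l)
    (hp1 : pr e1 = true) (hp2 : pr e2 = true) (hne : e1 ≠ e2) : 2 ≤ l.countP pr := by
  have := pmh_le_countP_of_superset (pr := pr) (l := l) {e1, e2} ?_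
  · rwa [Finset.card_pair hne] at this
  · intro a ha
    rcases Finset.mem_insert.1 ha with rfl | ha
    · exact ⟨h1, hp1⟩
    · rw [Finset.mem_singleton] at ha; subst ha; exact ⟨h2, hp2⟩

lemma pmh_one_le_countP {l : List α} (e1 : α) (h1 : e1 ∈ l) (hp1 : pr e1 = true) :
    1 ≤ l.countP pr := by
  have := pmh_le_countP_of_superset (pr := pr) (l := l) {e1} ?_
  · simpa using this
  · intro a ha
    rw [Finset.mem_singleton] at ha; subst ha; exact ⟨h1, hp1⟩

lemma pmh_three_le_countP {l : List α} (e1 e2 e3 : α) (h1 : e1 ∈ l) (h2 : e2 ∈ l) (h3 : e3 ∈ l)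
    (hp1 : pr e1 = true) (hp2 : pr e2 = true) (hp3 : pr e3 = true)
    (h12 : e1 ≠ e2) (h13 : e1 ≠ e3) (h23 : e2 ≠ e3) : 3 ≤ l.countP pr := by
  have := pmh_le_countP_of_superset (pr := pr) (l := l) {e1, e2, e3} ?_
  · have hc : ({e1, e2, e3} : Finset α).card = 3 := by
      rw [Finset.card_insert_of_notMem (by simp [h12, h13]), Finset.card_pair h23]
    rwa [hc] at this
  · intro a ha
    rcases Finset.mem_insert.1 ha with rfl | ha
    · exact ⟨h1, hp1⟩
    rcases Finset.mem_insert.1 ha with rfl | ha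
    · exact ⟨h2, hp2⟩
    rw [Finset.mem_singleton] at ha; subst ha; exact ⟨h3, hp3⟩

lemma pmh_countP_or_disjoint (p q : α → Bool) : ∀ (l : List α),
    (∀ a ∈ l, ¬(p a = true ∧ q a = true)) →
    l.countP (fun x => p x || q x) = l.countP p + l.countP q := by
  intro l
  induction l with
  | nil => simp
  | cons a l ih =>
    intro h
    rw [List.countP_cons, List.countP_cons, List.countP_cons,
      ih (fun x hx => h x (List.mem_cons_of_mem _ hx))]
    have := h a (List.mem_cons_self)
    cases hp : p a <;> cases hq : q a <;> simp_all <;> omega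

lemma pmh_three_in_two {x y z a b : α} (hx : x = a ∨ x = b) (hy : y = a ∨ y = b)
    (hz : z = a ∨ z = b) (h1 : x ≠ y) (h2 : x ≠ z) (h3 : y ≠ z) : False := by
  rcases hx with rfl | rfl <;> rcases hy with hy | hy <;> rcases hz with hz | hz <;>
    first
      | exact h1 hy.symm
      | exact h2 hz.symm
      | exact h3 (hy.trans hz.symm)

end ListAux

section Arith
variable {p : ℕ}

lemma pmh_val_flip (hp : Even p) (hp6 : 6 ≤ p) (a : ZMod p) : (a+1).val % 2 ≠ a.val % 2 := by
  haveI : NeZero p := ⟨by omega⟩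
  haveI : Fact (1 < p) := ⟨by omega⟩
  have h1 : (a + 1).val = (a.val + 1) % p := by
    rw [ZMod.val_add, ZMod.val_one]
  have h2 : a.val < p := ZMod.val_lt a
  have h3 : p % 2 = 0 := Nat.even_iff.mp hp
  rcases Nat.lt_or_ge (a.val + 1) p with h | h
  · rw [Nat.mod_eq_of_lt h] at h1; omega
  · have h4 : a.val + 1 = p := by omega
    rw [h4, Nat.mod_self] at h1; omega

lemma pmh_one_ne_zero (hp6 : 6 ≤ p) : (1 : ZMod p) ≠ 0 := by
  haveI : NeZero p := ⟨by omega⟩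
  haveI : Fact (1 < p) := ⟨by omega⟩
  intro h
  have h1 := ZMod.val_one p
  rw [h, ZMod.val_zero] at h1
  omega

lemma pmh_two_ne_zero (hp6 : 6 ≤ p) : (2 : ZMod p) ≠ 0 := by
  haveI : NeZero p := ⟨by omega⟩
  intro h
  have h2 : ((2 : ℕ) : ZMod p) = (2 : ZMod p) := by push_cast; ring
  have h1 := ZMod.val_cast_of_lt (show 2 < p by omega)
  rw [h2, h, ZMod.val_zero] at h1
  omega

lemma pmh_add_one_ne (hp6 : 6 ≤ p) (a : ZMod p) : a + 1 ≠ a := by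
  intro h
  have h1 : (1 : ZMod p) = 0 := by
    have h2 := congrArg (· - a) h
    simpa [add_comm, add_sub_cancel_right] using h2
  exact pmh_one_ne_zero hp6 h1

lemma pmh_add_two_ne (hp6 : 6 ≤ p) (a : ZMod p) : a + 1 + 1 ≠ a := by
  intro h
  have h1 : (2 : ZMod p) = 0 := by
    have h2 : a + 1 + 1 - a = a - a := congrArg (· - a) h
    rw [sub_self] at h2
    rw [← h2]; ring
  exact pmh_two_ne_zero hp6 h1

lemma pmh_sub_add_cancel (a : ZMod p) : a - 1 + 1 = a := by ring

end Arith

/-! ### The bad perfect matching -/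

/-- Row parity offsets: rows 0 and 1 get the "even" matching of `C_p`, row 2 the "odd" one. -/
def rowPar : ZMod 3 → ℕ := fun j => if j = 2 then 1 else 0

/-- The perfect matching of `C_p □ C_3` that does not extend to a Hamiltonian cycle:
all edges are horizontal; rows 0 and 1 are matched `(2k, 2k+1)`, row 2 is matched
`(2k+1, 2k+2)`. -/
def badM (p : ℕ) : ((cycGraph p) □ (cycGraph 3)).Subgraph where
  verts := Set.univ
  Adj a b := a.2 = b.2 ∧ a.1 ≠ b.1 ∧
    ((a.1.val % 2 = rowPar a.2 ∧ b.1 = a.1 + 1) ∨ (b.1.val % 2 = rowPar b.2 ∧ a.1 = b.1 + 1))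
  adj_sub := by
    rintro ⟨a1,a2⟩ ⟨b1,b2⟩ ⟨h1, h2, h3⟩
    dsimp only at *
    subst h1
    refine boxProd_adj.2 (Or.inl ⟨⟨h2, ?_⟩, rfl⟩)
    rcases h3 with ⟨_, h⟩ | ⟨_, h⟩
    · exact Or.inr h
    · exact Or.inl h
  edge_vert := fun h => Set.mem_univ _
  symm := by
    constructor
    rintro ⟨a1,a2⟩ ⟨b1,b2⟩ ⟨h1, h2, h3⟩
    dsimp only at *
    subst h1
    exact ⟨rfl, Ne.symm h2, h3.symm⟩

section Gap
variable {p : ℕ}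

/-- The three edges between column `g` and column `g+1`. -/
def gapE (p : ℕ) (g : ZMod p) (j : ZMod 3) : Sym2 (ZMod p × ZMod 3) := s((g,j),(g+1,j))

/-- Predicate for an edge to belong to the gap `g`. -/
def gapB (p : ℕ) (g : ZMod p) (e : Sym2 (ZMod p × ZMod 3)) : Bool :=
  decide (e = gapE p g 0 ∨ e = gapE p g 1 ∨ e = gapE p g 2)

lemma zmod3_cases (j : ZMod 3) : j = 0 ∨ j = 1 ∨ j = 2 := by revert j; decide

lemma gapE_eq_iff (hp6 : 6 ≤ p) {g g' : ZMod p} {j j' : ZMod 3} :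
    gapE p g j = gapE p g' j' ↔ (g = g' ∧ j = j') := by
  constructor
  · intro h
    rcases Sym2.eq_iff.1 h with ⟨h1, h2⟩ | ⟨h1, h2⟩
    · exact ⟨(Prod.ext_iff.1 h1).1, (Prod.ext_iff.1 h1).2⟩
    · exfalso
      have e1 : g = g' + 1 := (Prod.ext_iff.1 h1).1
      have e2 : g + 1 = g' := (Prod.ext_iff.1 h2).1
      rw [← e2] at e1
      exact pmh_add_two_ne hp6 g e1.symm
  · rintro ⟨rfl, rfl⟩; rfl

lemma gapB_gapE (hp6 : 6 ≤ p) {g g' : ZMod p} {j : ZMod 3} :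
    gapB p g' (gapE p g j) = true ↔ g = g' := by
  rw [gapB, decide_eq_true_iff]
  constructor
  · rintro (h | h | h) <;> exact ((gapE_eq_iff hp6).1 h).1
  · rintro rfl
    rcases zmod3_cases j with rfl | rfl | rfl
    · exact Or.inl rfl
    · exact Or.inr (Or.inl rfl)
    · exact Or.inr (Or.inr rfl)

lemma gapB_vert (hp6 : 6 ≤ p) {g : ZMod p} {u w : ZMod p × ZMod 3} (h : u.1 = w.1) :
    gapB p g s(u, w) = false := by
  rw [gapB, decide_eq_false_iff_not]
  rintro (he | he | he) <;>
  · rcases Sym2.eq_iff.1 he with ⟨h1, h2⟩ | ⟨h1, h2⟩ <;>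
      [(rw [(Prod.ext_iff.1 h1).1, (Prod.ext_iff.1 h2).1] at h;
        exact pmh_add_one_ne hp6 g h.symm);
       (rw [(Prod.ext_iff.1 h1).1, (Prod.ext_iff.1 h2).1] at h;
        exact pmh_add_one_ne hp6 g h)]

/-- The interval indicator whose cut consists of gaps `0` and `g`. -/
def indCut (p : ℕ) (g : ZMod p) : ZMod p × ZMod 3 → Bool :=
  fun x => decide (0 < x.1.val ∧ x.1.val ≤ g.val)

lemma pmh_cross_arith (hp : Even p) (hp6 : 6 ≤ p) {g : ZMod p} (hg : g ≠ 0) (a : ZMod p) :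
    (xor (decide (0 < a.val ∧ a.val ≤ g.val)) (decide (0 < (a+1).val ∧ (a+1).val ≤ g.val)))
      = (decide (a = 0) || decide (a = g)) := by
  haveI : NeZero p := ⟨by omega⟩
  haveI : Fact (1 < p) := ⟨by omega⟩
  have h1 : (a + 1).val = (a.val + 1) % p := by rw [ZMod.val_add, ZMod.val_one]
  have h2 : a.val < p := ZMod.val_lt a
  have h3 : g.val < p := ZMod.val_lt g
  have h4 : g.val ≠ 0 := fun h => hg ((ZMod.val_eq_zero g).1 h)
  have h5 : a = 0 ↔ a.val = 0 := ⟨fun h => by rw [h, ZMod.val_zero], fun h => (ZMod.val_eq_zero a).1 h⟩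
  have h6 : a = g ↔ a.val = g.val := ⟨fun h => by rw [h], fun h => ZMod.val_injective p h⟩
  rw [Bool.eq_iff_iff, Bool.xor_iff_ne, Bool.or_eq_true]
  simp only [ne_eq, decide_eq_decide, decide_eq_true_iff, h5, h6]
  rcases Nat.lt_or_ge (a.val + 1) p with h | h
  · rw [Nat.mod_eq_of_lt h] at h1; rw [h1]; constructor
    · intro hne; by_contra hc; push_neg at hc; omega
    · intro hor; omega
  · have h7 : a.val + 1 = p := by omega
    rw [h7, Nat.mod_self] at h1; rw [h1]; constructor
    · intro hne; by_contra hc; push_neg at hc; omega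
    · intro hor; omega

lemma gapB_gapE_decide (hp6 : 6 ≤ p) {g g' : ZMod p} {j : ZMod 3} :
    gapB p g' (gapE p g j) = decide (g = g') := by
  rw [Bool.eq_iff_iff, gapB_gapE hp6, decide_eq_true_iff]

lemma pmh_cross_eq_gaps (hp : Even p) (hp6 : 6 ≤ p) {g : ZMod p} (hg : g ≠ 0)
    {u w : ZMod p × ZMod 3} (h : ((cycGraph p) □ (cycGraph 3)).Adj u w) :
    pmhCrossB (indCut p g) s(u,w) = (gapB p 0 s(u,w) || gapB p g s(u,w)) := by
  have hcr : ∀ x y : ZMod p × ZMod 3, pmhCrossB (indCut p g) s(x,y) = xor (indCut p g x) (indCut p g y) :=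
    fun x y => rfl
  have hgapE : ∀ (a : ZMod p) (j : ZMod 3),
      pmhCrossB (indCut p g) (gapE p a j) = (gapB p 0 (gapE p a j) || gapB p g (gapE p a j)) := by
    intro a j
    have h1 : pmhCrossB (indCut p g) (gapE p a j)
        = xor (indCut p g (a,j)) (indCut p g (a+1,j)) := rfl
    rw [h1, gapB_gapE_decide hp6, gapB_gapE_decide hp6]
    exact pmh_cross_arith hp hp6 hg a
  rcases boxProd_adj.1 h with ⟨⟨hne, hor⟩, hrow⟩ | ⟨hadj3, hcol⟩
  · rcases hor with h1 | h1
    · have hw : u = (w.1 + 1, w.2) := Prod.ext_iff.2 ⟨h1, hrow⟩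
      have he : s(u, w) = gapE p w.1 w.2 := by
        rw [hw, Sym2.eq_swap]; rfl
      rw [he]; exact hgapE _ _
    · have hw : w = (u.1 + 1, u.2) := Prod.ext_iff.2 ⟨h1, hrow.symm⟩
      have he : s(u, w) = gapE p u.1 u.2 := by rw [hw]; rfl
      rw [he]; exact hgapE _ _
  · rw [hcr, gapB_vert hp6 hcol, gapB_vert hp6 hcol]
    have hiw : indCut p g u = indCut p g w := by
      unfold indCut; rw [hcol]
    rw [hiw, Bool.xor_self, Bool.or_self]

lemma pmh_gap_pair_even (hp : Even p) (hp6 : 6 ≤ p) {v : ZMod p × ZMod 3}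
    (c : ((cycGraph p) □ (cycGraph 3)).Walk v v) {g : ZMod p} (hg : g ≠ 0) :
    (c.edges.countP (gapB p 0) + c.edges.countP (gapB p g)) % 2 = 0 := by
  haveI : NeZero p := ⟨by omega⟩
  have h0 := pmh_parity_cross_closed (indCut p g) c
  have he : ∀ e ∈ c.edges, pmhCrossB (indCut p g) e = true ↔ (fun e => gapB p 0 e || gapB p g e) e = true := by
    intro e hee
    have hG := c.edges_subset_edgeSet hee
    induction e using Sym2.ind with
    | _ x y =>
      rw [SimpleGraph.mem_edgeSet] at hG
      rw [pmh_cross_eq_gaps hp hp6 hg hG]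
  rw [List.countP_congr he] at h0
  rwa [pmh_countP_or_disjoint (gapB p 0) (gapB p g) c.edges ?_] at h0
  intro e hee hab
  obtain ⟨ha, hb⟩ := hab
  rcases of_decide_eq_true ha with h | h | h <;>
    (rw [h] at hb; exact hg ((gapB_gapE hp6).1 hb).symm)

end Gap

lemma rowPar_lt_two (j : ZMod 3) : rowPar j < 2 := by
  rw [rowPar]; split <;> omega

lemma badM_adj {p : ℕ} {a b : ZMod p × ZMod 3} : (badM p).Adj a b ↔
    (a.2 = b.2 ∧ a.1 ≠ b.1 ∧
      ((a.1.val % 2 = rowPar a.2 ∧ b.1 = a.1 + 1) ∨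
        (b.1.val % 2 = rowPar b.2 ∧ a.1 = b.1 + 1))) := Iff.rfl

lemma badM_adjL {p : ℕ} (hp6 : 6 ≤ p) {i : ZMod p} {j : ZMod 3} (h : i.val % 2 = rowPar j) :
    (badM p).Adj (i, j) (i + 1, j) :=
  ⟨rfl, fun hh => pmh_add_one_ne hp6 i hh.symm, Or.inl ⟨h, rfl⟩⟩

lemma badM_adjR {p : ℕ} (hp : Even p) (hp6 : 6 ≤ p) {i : ZMod p} {j : ZMod 3}
    (h : i.val % 2 ≠ rowPar j) : (badM p).Adj (i, j) (i - 1, j) := by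
  have hflip := pmh_val_flip hp hp6 (i-1)
  rw [pmh_sub_add_cancel] at hflip
  have hrp := rowPar_lt_two j
  have h2 : i.val % 2 < 2 := Nat.mod_lt _ (by omega)
  have h3 : (i-1).val % 2 = rowPar j := by omega
  refine ⟨rfl, ?_, Or.inr ⟨h3, (pmh_sub_add_cancel i).symm⟩⟩
  intro hh
  exact pmh_add_one_ne hp6 (i-1) ((pmh_sub_add_cancel i).trans hh)

lemma badM_pm {p : ℕ} (hp : Even p) (hp6 : 6 ≤ p) : (badM p).IsPerfectMatching := by
  constructor
  · rintro ⟨i, j⟩ -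
    by_cases hpar : i.val % 2 = rowPar j
    · refine ⟨(i+1, j), badM_adjL hp6 hpar, ?_⟩
      rintro ⟨w1, w2⟩ ⟨h1, h2, h3⟩
      dsimp only at h1 h2 h3
      subst h1
      rcases h3 with ⟨_, h⟩ | ⟨hw, hw2⟩
      · rw [h]
      · exfalso
        have hflip := pmh_val_flip hp hp6 w1
        rw [← hw2] at hflip
        exact hflip (hpar.trans hw.symm)
    · refine ⟨(i-1, j), badM_adjR hp hp6 hpar, ?_⟩
      rintro ⟨w1, w2⟩ ⟨h1, h2, h3⟩
      dsimp only at h1 h2 h3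
      subst h1
      rcases h3 with ⟨hw, h⟩ | ⟨hw, hw2⟩
      · exact absurd hw hpar
      · have : w1 = i - 1 := by rw [hw2]; ring
        rw [this]
  · intro v
    exact Set.mem_univ _

/-- For every even `p ≥ 6`, the graph `C_p □ C_3` does not have the PMH-property. -/
theorem stmt_9 (p : ℕ) (hp : Even p) (hp6 : 6 ≤ p) :
    ¬ HasPMH (cycGraph p □ cycGraph 3) := by
  haveI : NeZero p := ⟨by omega⟩
  rintro ⟨-, hall⟩
  obtain ⟨N, hN, v0, c, hHam, hEdges⟩ := hall (badM p) (badM_pm hp hp6)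
  have hMpm := badM_pm (p := p) hp hp6
  have hcyc : c.IsCycle := hHam.isCycle
  have hnodup : c.edges.Nodup := hcyc.isCircuit.isTrail.edges_nodup
  have hsupp : ∀ w, w ∈ c.support := hHam.mem_support
  have hMN : ∀ e, e ∈ c.edges ↔ (e ∈ (badM p).edgeSet ∨ e ∈ N.edgeSet) := by
    intro e
    have h := Set.ext_iff.mp hEdges e
    simpa [walkEdgeSet, Set.mem_union, Set.mem_setOf_eq] using h
  have hMNadj : ∀ x y, s(x,y) ∈ c.edges → (badM p).Adj x y ∨ N.Adj x y := by
    intro x y h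
    rcases (hMN _).1 h with h' | h'
    · exact Or.inl (Subgraph.mem_edgeSet.1 h')
    · exact Or.inr (Subgraph.mem_edgeSet.1 h')
  have hMin : ∀ x y, (badM p).Adj x y → s(x,y) ∈ c.edges :=
    fun x y h => (hMN _).2 (Or.inl (Subgraph.mem_edgeSet.2 h))
  have hNin : ∀ x y, N.Adj x y → s(x,y) ∈ c.edges :=
    fun x y h => (hMN _).2 (Or.inr (Subgraph.mem_edgeSet.2 h))
  have hMuniq : ∀ x y y', (badM p).Adj x y → (badM p).Adj x y' → y = y' := by
    intro x y y' h1 h2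
    obtain ⟨w, -, hu⟩ := hMpm.1 (hMpm.2 x)
    rw [hu y h1, hu y' h2]
  have hNuniq : ∀ x y y', N.Adj x y → N.Adj x y' → y = y' := by
    intro x y y' h1 h2
    obtain ⟨w, -, hu⟩ := hN.1 (hN.2 x)
    rw [hu y h1, hu y' h2]
  have hNex : ∀ x, ∃ y, N.Adj x y := fun x => (hN.1 (hN.2 x)).exists
  have hMex : ∀ x, ∃ y, (badM p).Adj x y := fun x => (hMpm.1 (hMpm.2 x)).exists
  have htwo : ∀ x, ∃ a b, a ≠ b ∧ s(x,a) ∈ c.edges ∧ s(x,b) ∈ c.edges := by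
    intro x
    obtain ⟨a, b, hab, h1, h2⟩ := pmh_cycle_two_edges (c.rotate x (hsupp x)) (hcyc.rotate (hsupp x))
    exact ⟨a, b, hab, (c.rotate_edges x (hsupp x)).mem_iff.1 h1,
      (c.rotate_edges x (hsupp x)).mem_iff.1 h2⟩
  have hAt : ∀ x ma na y, (badM p).Adj x ma → N.Adj x na → s(x,y) ∈ c.edges →
      y = ma ∨ y = na := by
    intro x ma na y hm hn he
    rcases hMNadj x y he with h | h
    · exact Or.inl (hMuniq x y ma h hm)
    · exact Or.inr (hNuniq x y na h hn)
  have hMNne : ∀ x ma na, (badM p).Adj x ma → N.Adj x na → ma ≠ na := by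
    intro x ma na hm hn heq
    subst heq
    obtain ⟨a, b, hab, ha, hb⟩ := htwo x
    have h1 := hAt x ma ma a hm hn ha
    have h2 := hAt x ma ma b hm hn hb
    exact hab ((h1.elim id id).trans (h2.elim id id).symm)
  -- concrete M-edges
  have hrowPar0 : rowPar 0 = 0 := by decide
  have hrowPar1 : rowPar 1 = 0 := by decide
  have hrowPar2 : rowPar 2 = 1 := by decide
  have hMgap0 : ∀ g : ZMod p, g.val % 2 = 0 → (badM p).Adj (g, 0) (g+1, 0) :=
    fun g h => badM_adjL hp6 (by rw [hrowPar0]; exact h)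
  have hMgap1 : ∀ g : ZMod p, g.val % 2 = 0 → (badM p).Adj (g, 1) (g+1, 1) :=
    fun g h => badM_adjL hp6 (by rw [hrowPar1]; exact h)
  have hMgap2 : ∀ g : ZMod p, g.val % 2 = 1 → (badM p).Adj (g, 2) (g+1, 2) :=
    fun g h => badM_adjL hp6 (by rw [hrowPar2]; exact h)
  have hIn0 : ∀ g : ZMod p, g.val % 2 = 0 → gapE p g 0 ∈ c.edges :=
    fun g h => hMin _ _ (hMgap0 g h)
  have hIn1 : ∀ g : ZMod p, g.val % 2 = 0 → gapE p g 1 ∈ c.edges :=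
    fun g h => hMin _ _ (hMgap1 g h)
  have hIn2 : ∀ g : ZMod p, g.val % 2 = 1 → gapE p g 2 ∈ c.edges :=
    fun g h => hMin _ _ (hMgap2 g h)
  have hgne : ∀ (g : ZMod p) (j j' : ZMod 3), j ≠ j' → gapE p g j ≠ gapE p g j' := by
    intro g j j' hne h
    exact hne ((gapE_eq_iff hp6).1 h).2
  have hgB : ∀ (g : ZMod p) (j : ZMod 3), gapB p g (gapE p g j) = true :=
    fun g j => (gapB_gapE hp6).2 rfl
  set d : ZMod p → ℕ := fun g => c.edges.countP (gapB p g) with hd_def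
  have hd_le : ∀ g, d g ≤ 3 := by
    intro g
    refine pmh_countP_le_three hnodup (gapE p g 0) (gapE p g 1) (gapE p g 2) ?_
    intro a ha hpa
    exact of_decide_eq_true hpa
  have hd_ge_even : ∀ g : ZMod p, g.val % 2 = 0 → 2 ≤ d g := by
    intro g hg
    exact pmh_two_le_countP _ _ (hIn0 g hg) (hIn1 g hg) (hgB g 0) (hgB g 1)
      (hgne g 0 1 (by decide))
  have hd_ge_odd : ∀ g : ZMod p, g.val % 2 = 1 → 1 ≤ d g := by
    intro g hg
    exact pmh_one_le_countP _ (hIn2 g hg) (hgB g 2)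
  have hpair : ∀ g : ZMod p, g ≠ 0 → (d 0 + d g) % 2 = 0 :=
    fun g hg => pmh_gap_pair_even hp hp6 c hg
  by_cases hpar0 : d 0 % 2 = 0
  -- EVEN case
  · have hall2 : ∀ g : ZMod p, d g = 2 := by
      intro g
      have h2 : d g ≤ 3 := hd_le g
      have hpg : d g % 2 = 0 := by
        by_cases hg0 : g = 0
        · rw [hg0]; exact hpar0
        · have := hpair g hg0; omega
      have hval : g.val % 2 = 0 ∨ g.val % 2 = 1 := by omega
      rcases hval with hg | hg
      · have := hd_ge_even g hg; omega
      · have := hd_ge_odd g hg; omega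
    have hA1 : ∀ g : ZMod p, g.val % 2 = 0 → gapE p g 2 ∉ c.edges := by
      intro g hg hc2
      have h3 : 3 ≤ d g :=
        pmh_three_le_countP _ _ _ (hIn0 g hg) (hIn1 g hg) hc2 (hgB g 0) (hgB g 1) (hgB g 2)
          (hgne g 0 1 (by decide)) (hgne g 0 2 (by decide)) (hgne g 1 2 (by decide))
      rw [hall2 g] at h3; omega
    have hA3some : ∀ g : ZMod p, g.val % 2 = 1 →
        gapE p g 0 ∈ c.edges ∨ gapE p g 1 ∈ c.edges := by
      intro g hg
      by_contra hc'
      push_neg at hc'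
      have hle : d g ≤ 1 := by
        refine pmh_countP_le_one hnodup (gapE p g 2) ?_
        intro a ha hpa
        rcases of_decide_eq_true hpa with h | h | h
        · exact absurd (h ▸ ha) hc'.1
        · exact absurd (h ▸ ha) hc'.2
        · exact h
      rw [hall2 g] at hle; omega
    have hA2 : ∀ i : ZMod p, N.Adj (i,(2:ZMod 3)) (i,0) ∨ N.Adj (i,(2:ZMod 3)) (i,1) := by
      intro i
      obtain ⟨w, hw⟩ := hNex (i,(2:ZMod 3))
      have hwe : s((i,(2:ZMod 3)), w) ∈ c.edges := hNin _ _ hw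
      have hadj := c.edges_subset_edgeSet hwe
      rw [SimpleGraph.mem_edgeSet] at hadj
      rcases boxProd_adj.1 hadj with ⟨⟨hne, hor⟩, hrow⟩ | ⟨hadj3, hcol⟩
      · exfalso
        have hw2 : w.2 = 2 := hrow.symm
        rcases hor with h1 | h1
        · have h1' : i = w.1 + 1 := h1
          have hwe' : w = (w.1, (2:ZMod 3)) := Prod.ext_iff.2 ⟨rfl, hw2⟩
          rw [hwe'] at hwe hw
          rw [h1'] at hwe hw
          rw [Sym2.eq_swap] at hwe
          by_cases hpw : w.1.val % 2 = 0
          · exact hA1 w.1 hpw hwe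
          · exact hMNne _ _ _ (hMgap2 w.1 (by omega)).symm hw rfl
        · have h1' : w.1 = i + 1 := h1
          have hwe' : w = ((i+1 : ZMod p), (2:ZMod 3)) := Prod.ext_iff.2 ⟨h1', hw2⟩
          rw [hwe'] at hwe hw
          by_cases hpw : i.val % 2 = 0
          · exact hA1 i hpw hwe
          · exact hMNne _ _ _ (hMgap2 i (by omega)) hw rfl
      · have hcol' : w = (i, w.2) := Prod.ext_iff.2 ⟨hcol.symm, rfl⟩
        have hne2 : w.2 ≠ 2 := fun hh => hadj3.1 hh.symm
        rcases zmod3_cases w.2 with h0 | h0 | h0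
        · left; rw [hcol', h0] at hw; exact hw
        · right; rw [hcol', h0] at hw; exact hw
        · exact absurd h0 hne2
    have hA2nb : ∀ i : ZMod p, ¬(N.Adj (i,(2:ZMod 3)) (i,0) ∧ N.Adj (i,(2:ZMod 3)) (i,1)) := by
      rintro i ⟨h0', h1'⟩
      have h := hNuniq _ _ _ h0' h1'
      have h' : (0:ZMod 3) = 1 := (Prod.ext_iff.1 h).2
      exact absurd h' (by decide)
    have hno01 : ∀ i : ZMod p, ¬ N.Adj (i,(0:ZMod 3)) (i,1) := by
      intro i h01
      rcases hA2 i with h | h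
      · have hu := hNuniq _ _ _ h01 h.symm
        have hu' : (1:ZMod 3) = 2 := (Prod.ext_iff.1 hu).2
        exact absurd hu' (by decide)
      · have hu := hNuniq _ _ _ h01.symm h.symm
        have hu' : (0:ZMod 3) = 2 := (Prod.ext_iff.1 hu).2
        exact absurd hu' (by decide)
    have hA4₀ : ∀ i : ZMod p, i.val % 2 = 1 → N.Adj (i,(2:ZMod 3)) (i,0) →
        N.Adj ((i+1 : ZMod p),(2:ZMod 3)) (i+1,0) := by
      intro i hi hP
      have hN0 : N.Adj (i,(0:ZMod 3)) (i,2) := hP.symm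
      have hM0 : (badM p).Adj (i,(0:ZMod 3)) (i-1,0) :=
        badM_adjR hp hp6 (by rw [hrowPar0]; omega)
      have hgap0 : gapE p i 0 ∉ c.edges := by
        intro hmem
        rcases hAt (i,(0:ZMod 3)) _ _ ((i+1 : ZMod p), (0:ZMod 3)) hM0 hN0 hmem with h | h
        · apply pmh_add_two_ne hp6 (i-1)
          rw [pmh_sub_add_cancel]
          exact (Prod.ext_iff.1 h).1
        · have h' : (0:ZMod 3) = 2 := (Prod.ext_iff.1 h).2
          exact absurd h' (by decide)
      have hgap1 : gapE p i 1 ∈ c.edges := (hA3some i hi).resolve_left hgap0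
      have hgap1' : s(((i+1:ZMod p),(1:ZMod 3)), (i,1)) ∈ c.edges := by
        rw [Sym2.eq_swap]; exact hgap1
      have hflip := pmh_val_flip hp hp6 i
      have hM1 : (badM p).Adj ((i+1:ZMod p),(1:ZMod 3)) (i+1+1,1) :=
        badM_adjL hp6 (by rw [hrowPar1]; omega)
      obtain ⟨nb, hnb⟩ := hNex ((i+1:ZMod p),(1:ZMod 3))
      rcases hAt _ _ _ ((i : ZMod p),(1:ZMod 3)) hM1 hnb hgap1' with h | h
      · exact absurd (Prod.ext_iff.1 h).1.symm (pmh_add_two_ne hp6 i)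
      · have hN1 : N.Adj ((i+1:ZMod p),(1:ZMod 3)) (i,1) := by rw [← h] at hnb; exact hnb
        rcases hA2 (i+1) with h' | h'
        · exact h'
        · exfalso
          have hu := hNuniq _ _ _ h'.symm hN1
          exact pmh_add_one_ne hp6 i (Prod.ext_iff.1 hu).1
    have hA4₁ : ∀ i : ZMod p, i.val % 2 = 1 → N.Adj (i,(2:ZMod 3)) (i,1) →
        N.Adj ((i+1 : ZMod p),(2:ZMod 3)) (i+1,1) := by
      intro i hi hP
      have hN0 : N.Adj (i,(1:ZMod 3)) (i,2) := hP.symm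
      have hM0 : (badM p).Adj (i,(1:ZMod 3)) (i-1,1) :=
        badM_adjR hp hp6 (by rw [hrowPar1]; omega)
      have hgap1 : gapE p i 1 ∉ c.edges := by
        intro hmem
        rcases hAt (i,(1:ZMod 3)) _ _ ((i+1 : ZMod p), (1:ZMod 3)) hM0 hN0 hmem with h | h
        · apply pmh_add_two_ne hp6 (i-1)
          rw [pmh_sub_add_cancel]
          exact (Prod.ext_iff.1 h).1
        · have h' : (1:ZMod 3) = 2 := (Prod.ext_iff.1 h).2
          exact absurd h' (by decide)
      have hgap0 : gapE p i 0 ∈ c.edges := (hA3some i hi).resolve_right hgap1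
      have hgap0' : s(((i+1:ZMod p),(0:ZMod 3)), (i,0)) ∈ c.edges := by
        rw [Sym2.eq_swap]; exact hgap0
      have hflip := pmh_val_flip hp hp6 i
      have hM1 : (badM p).Adj ((i+1:ZMod p),(0:ZMod 3)) (i+1+1,0) :=
        badM_adjL hp6 (by rw [hrowPar0]; omega)
      obtain ⟨nb, hnb⟩ := hNex ((i+1:ZMod p),(0:ZMod 3))
      rcases hAt _ _ _ ((i : ZMod p),(0:ZMod 3)) hM1 hnb hgap0' with h | h
      · exact absurd (Prod.ext_iff.1 h).1.symm (pmh_add_two_ne hp6 i)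
      · have hN1 : N.Adj ((i+1:ZMod p),(0:ZMod 3)) (i,0) := by rw [← h] at hnb; exact hnb
        rcases hA2 (i+1) with h' | h'
        · exfalso
          have hu := hNuniq _ _ _ h'.symm hN1
          exact pmh_add_one_ne hp6 i (Prod.ext_iff.1 hu).1
        · exact h'
    have hA4iff : ∀ i : ZMod p, i.val % 2 = 1 →
        (N.Adj (i,(2:ZMod 3)) (i,0) ↔ N.Adj ((i+1:ZMod p),(2:ZMod 3)) (i+1,0)) := by
      intro i hi
      constructor
      · exact hA4₀ i hi
      · intro h
        by_contra hc
        have hP1 : N.Adj (i,(2:ZMod 3)) (i,1) := (hA2 i).resolve_left hc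
        exact hA2nb (i+1) ⟨h, hA4₁ i hi hP1⟩
    -- the separating set
    have hmemS : ((0:ZMod p),(0:ZMod 3)) ∈
        {x : ZMod p × ZMod 3 | x.2 = 0 ∨ (x.2 = 2 ∧ N.Adj (x.1,(2:ZMod 3)) (x.1,0))} :=
      Or.inl rfl
    have hmemS' : ((0:ZMod p),(1:ZMod 3)) ∉
        {x : ZMod p × ZMod 3 | x.2 = 0 ∨ (x.2 = 2 ∧ N.Adj (x.1,(2:ZMod 3)) (x.1,0))} := by
      rintro (h | ⟨h, -⟩)
      · have h' : (1:ZMod 3) = 0 := h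
        exact absurd h' (by decide)
      · have h' : (1:ZMod 3) = 2 := h
        exact absurd h' (by decide)
    obtain ⟨u, w, he, huS, hwS⟩ := pmh_cross_of_closed c (hsupp _) (hsupp _) hmemS hmemS'
    rcases hMNadj u w he with hM' | hN'
    · have hrow : u.2 = w.2 := hM'.1
      rcases huS with hu0 | ⟨hu2, hP⟩
      · exact hwS (Or.inl (hrow.symm.trans hu0))
      · apply hwS
        right
        refine ⟨hrow.symm.trans hu2, ?_⟩
        obtain ⟨-, hne, hor⟩ := hM'
        rcases hor with ⟨hpar', h1⟩ | ⟨hpar', h1⟩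
        · have hodd : u.1.val % 2 = 1 := by rw [hpar', hu2]; exact hrowPar2
          have hres := hA4₀ u.1 hodd hP
          rw [h1]; exact hres
        · have hw2 : w.2 = 2 := hrow.symm.trans hu2
          have hodd : w.1.val % 2 = 1 := by rw [hpar', hw2]; exact hrowPar2
          refine (hA4iff w.1 hodd).2 ?_
          rw [← h1]; exact hP
    · rcases huS with hu0 | ⟨hu2, hP⟩
      · have hu' : u = (u.1, (0:ZMod 3)) := Prod.ext_iff.2 ⟨rfl, hu0⟩
        rw [hu'] at hN'
        have hadj := N.adj_sub hN'
        rcases boxProd_adj.1 hadj with ⟨⟨hne3, hor⟩, hrow3⟩ | ⟨hadj3, hcol⟩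
        · exact hwS (Or.inl hrow3.symm)
        · have hwu : w = (u.1, w.2) := Prod.ext_iff.2 ⟨hcol.symm, rfl⟩
          have hne0 : w.2 ≠ 0 := fun hh => hadj3.1 hh.symm
          rcases zmod3_cases w.2 with h0 | h0 | h0
          · exact absurd h0 hne0
          · rw [hwu, h0] at hN'
            exact absurd hN' (hno01 u.1)
          · apply hwS
            right
            rw [hwu, h0] at hN'
            exact ⟨h0, by rw [← hcol]; exact hN'.symm⟩
      · have hu' : u = (u.1, (2:ZMod 3)) := Prod.ext_iff.2 ⟨rfl, hu2⟩
        rw [hu'] at hN'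
        have hwq := hNuniq _ _ _ hN' hP
        apply hwS
        rw [hwq]
        exact Or.inl rfl
  -- ODD case
  · have hodd : ∀ g : ZMod p, g.val % 2 = 0 → d g = 3 := by
      intro g hg
      have h1 : 2 ≤ d g := hd_ge_even g hg
      have h2 : d g ≤ 3 := hd_le g
      by_cases hg0 : g = 0
      · subst hg0; omega
      · have := hpair g hg0; omega
    have hIn2' : ∀ g : ZMod p, g.val % 2 = 0 → gapE p g 2 ∈ c.edges := by
      intro g hg
      by_contra hc2
      have hle : d g ≤ 2 := by
        refine pmh_countP_le_two hnodup (gapE p g 0) (gapE p g 1) ?_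
        intro a ha hpa
        rcases of_decide_eq_true hpa with h | h | h
        · exact Or.inl h
        · exact Or.inr h
        · exact absurd (h ▸ ha) hc2
      rw [hodd g hg] at hle; omega
    have hmem2 : ((0:ZMod p),(2:ZMod 3)) ∈ {x : ZMod p × ZMod 3 | x.2 = 2} := rfl
    have hmem0 : ((0:ZMod p),(0:ZMod 3)) ∉ {x : ZMod p × ZMod 3 | x.2 = 2} := by
      intro h
      have h' : (0:ZMod 3) = 2 := h
      exact absurd h' (by decide)
    obtain ⟨u, w, he, hu2, hw2⟩ := pmh_cross_of_closed c
      (hsupp ((0 : ZMod p), (2 : ZMod 3))) (hsupp ((0 : ZMod p), (0 : ZMod 3)))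
      hmem2 hmem0
    obtain ⟨i, j⟩ := u
    have hj : j = 2 := hu2
    subst hj
    have hflip := pmh_val_flip hp hp6 (i-1)
    rw [pmh_sub_add_cancel] at hflip
    have hi2 : i.val % 2 < 2 := Nat.mod_lt _ (by omega)
    have hA : s((i, (2:ZMod 3)), (i+1, 2)) ∈ c.edges := by
      by_cases hi : i.val % 2 = 0
      · exact hIn2' i hi
      · exact hMin _ _ (hMgap2 i (by omega))
    have hB : s((i, (2:ZMod 3)), (i-1, 2)) ∈ c.edges := by
      rw [Sym2.eq_swap]
      by_cases hi : i.val % 2 = 0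
      · have hmm := hMin _ _ (hMgap2 (i-1) (by omega))
        rwa [pmh_sub_add_cancel] at hmm
      · have hmm := hIn2' (i-1) (by omega)
        rw [gapE, pmh_sub_add_cancel] at hmm
        exact hmm
    obtain ⟨na, hna⟩ := hNex (i, (2:ZMod 3))
    obtain ⟨ma, hma⟩ := hMex (i, (2:ZMod 3))
    have h1 := hAt _ ma na w hma hna he
    have h2 := hAt _ ma na ((i+1 : ZMod p), (2:ZMod 3)) hma hna hA
    have h3 := hAt _ ma na ((i-1 : ZMod p), (2:ZMod 3)) hma hna hB
    have hw_ne1 : w ≠ ((i+1 : ZMod p), (2:ZMod 3)) := by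
      intro hh; exact hw2 (by rw [hh]; rfl)
    have hw_ne2 : w ≠ ((i-1 : ZMod p), (2:ZMod 3)) := by
      intro hh; exact hw2 (by rw [hh]; rfl)
    have hne12 : ((i+1 : ZMod p), (2:ZMod 3)) ≠ ((i-1 : ZMod p), (2:ZMod 3)) := by
      intro hh
      have h' : i + 1 = i - 1 := (Prod.ext_iff.1 hh).1
      apply pmh_add_two_ne hp6 (i-1)
      rw [pmh_sub_add_cancel, ← h']
    exact pmh_three_in_two h1 h2 h3 hw_ne1 hw_ne2 hne12
end
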